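/- arXiv:2204.10775 — 5 statements merged into one kernel-verified Lean document; each statement's English description precedes it below -/
import Mathlib

section
/- Let V be a finite vertex set. Two tournaments T1 and T2 on V satisfy g_{T1} = g_{T2} if and only if T1 and T2 are switching equivalent; moreover every oriented two-graph on V equals g_T for some tournament T on V. Consequently the map sending the switching class of T to g_T is a bijection between switching classes of tournaments on V and oriented two-graphs on V. -/
def IsTournament {V : Type*} (e : V → V → ℤ) : Prop :=
  (∀ x y : V, e y x = - e x y) ∧ ∀ x y : V, x ≠ y → e x y = 1 ∨ e x y = -1

def gT {V : Type*} (e : V → V → ℤ) : V → V → V → ℤ :=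
  fun x y z => e x y * e y z * e z x

def IsOrientedTwoGraph {V : Type*} (g : V → V → V → ℤ) : Prop :=
  (∀ x y z : V, g y x z = - g x y z) ∧
  (∀ x y z : V, g x z y = - g x y z) ∧
  (∀ x y z : V, x ≠ y → y ≠ z → x ≠ z → g x y z = 1 ∨ g x y z = -1) ∧
  (∀ x y z w : V, x ≠ y → x ≠ z → x ≠ w → y ≠ z → y ≠ w → z ≠ w →
    g x y z * g y x w * g z y w * g x z w = 1)

open scoped Classical in
/-- The tournament `T` switched with respect to `X`: all edges between `X` and its
complement are reversed. -/
noncomputable def switchT {V : Type*} (e : V → V → ℤ) (X : Set V) : V → V → ℤ :=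
  fun x y => if x ∈ X ↔ y ∈ X then e x y else - e x y

/-- Two tournaments are switching equivalent if one is obtained from the other by
switching with respect to some subset of the vertices. -/
def SwitchEquiv {V : Type*} (e₁ e₂ : V → V → ℤ) : Prop :=
  ∃ X : Set V, e₂ = switchT e₁ X

/-- two tournaments on `V` satisfy `g_{T1} = g_{T2}` iff they are switching
equivalent, and every oriented two-graph on `V` is of the form `g_T`.  Together these say
exactly that `T ↦ g_T` induces a well-defined bijection from switching classes of
tournaments on `V` onto oriented two-graphs on `V`. -/
theorem statement1 {V : Type*} [Fintype V] :
    (∀ e₁ e₂ : V → V → ℤ, IsTournament e₁ → IsTournament e₂ →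
      (gT e₁ = gT e₂ ↔ SwitchEquiv e₁ e₂)) ∧
    (∀ g : V → V → V → ℤ, IsOrientedTwoGraph g →
      ∃ e : V → V → ℤ, IsTournament e ∧ gT e = g) := by
  classical
  constructor
  · intro e₁ e₂ h₁ h₂
    have h1zero : ∀ x, e₁ x x = 0 := fun x => by have := h₁.1 x x; omega
    have h2zero : ∀ x, e₂ x x = 0 := fun x => by have := h₂.1 x x; omega
    constructor
    · intro hg
      by_cases hV : Nonempty V
      · obtain ⟨v₀⟩ := hV
        refine ⟨{y | y ≠ v₀ ∧ e₁ v₀ y ≠ e₂ v₀ y}, ?_⟩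
        set X : Set V := {y | y ≠ v₀ ∧ e₁ v₀ y ≠ e₂ v₀ y} with hX
        have hv₀ : v₀ ∉ X := fun h => h.1 rfl
        have hrel : ∀ z, z ≠ v₀ → e₂ v₀ z = (if z ∈ X then (-1 : ℤ) else 1) * e₁ v₀ z := by
          intro z hz
          by_cases hzX : z ∈ X
          · rcases h₁.2 v₀ z (Ne.symm hz) with ha | ha <;>
              rcases h₂.2 v₀ z (Ne.symm hz) with hb | hb <;>
              simp [hzX, ha, hb] <;> exact absurd (ha.trans hb.symm) hzX.2
          · have : e₁ v₀ z = e₂ v₀ z := by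
              by_contra hne
              exact hzX ⟨hz, hne⟩
            simp [hzX, this]
        funext x y
        show e₂ x y = switchT e₁ X x y
        unfold switchT
        by_cases hxy : x = y
        · rw [hxy]; split_ifs <;> simp [h1zero, h2zero]
        · by_cases hx : x = v₀
          · rw [hx]
            have hy : y ≠ v₀ := fun h => hxy (hx.trans h.symm)
            have h' := hrel y hy
            by_cases hyX : y ∈ X <;> simp [hyX, hv₀] at h' ⊢ <;> omega
          · by_cases hy : y = v₀
            · rw [hy]
              have h' := hrel x hx
              have e2a := h₂.1 v₀ x
              have e1a := h₁.1 v₀ x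
              by_cases hxX : x ∈ X <;> simp [hxX, hv₀] at h' ⊢ <;> omega
            · -- x ≠ v₀, y ≠ v₀, x ≠ y
              have heq : gT e₁ v₀ x y = gT e₂ v₀ x y := by rw [hg]
              unfold gT at heq
              have hrx := hrel x hx
              have hry := hrel y hy
              have e1yx := h₁.1 v₀ y
              have e2yx := h₂.1 v₀ y
              rw [e1yx, e2yx, hrx, hry] at heq
              rcases h₁.2 v₀ x (Ne.symm hx) with ha | ha <;>
                rcases h₁.2 v₀ y (Ne.symm hy) with hb | hb <;>
                by_cases hxX : x ∈ X <;> by_cases hyX : y ∈ X <;>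
                simp [hxX, hyX, ha, hb] at heq ⊢ <;>
                linarith [heq]
      · exact ⟨∅, funext fun x => (hV ⟨x⟩).elim⟩
    · rintro ⟨X, rfl⟩
      funext x y z
      show gT e₁ x y z = gT (switchT e₁ X) x y z
      unfold gT switchT
      by_cases hx : x ∈ X <;> by_cases hy : y ∈ X <;> by_cases hz : z ∈ X <;>
        simp [hx, hy, hz]
  · intro g hg
    obtain ⟨alt1, alt2, val, coc⟩ := hg
    have g0a : ∀ x z, g x x z = 0 := fun x z => by have := alt1 x x z; omega
    have g0b : ∀ x y, g x y y = 0 := fun x y => by have := alt2 x y y; omega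
    have g0c : ∀ x y, g x y x = 0 := fun x y => by
      have h := alt2 x y x; rw [g0a] at h; omega
    have gcyc : ∀ a b c, g a b c = g b c a := by
      intro a b c
      have h1 := alt2 b a c
      have h2 := alt1 a b c
      omega
    by_cases hV : Nonempty V
    · obtain ⟨v₀⟩ := hV
      set e : V → V → ℤ := fun x y => if x = y then 0 else if x = v₀ then 1 else
        if y = v₀ then -1 else -g x y v₀ with he
      have eself : ∀ x, e x x = 0 := fun x => by simp [he]
      have ev₀ : ∀ y, y ≠ v₀ → e v₀ y = 1 := fun y hy => by simp [he, Ne.symm hy]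
      have e_v₀ : ∀ x, x ≠ v₀ → e x v₀ = -1 := fun x hx => by simp [he, hx]
      have egen : ∀ x y, x ≠ y → x ≠ v₀ → y ≠ v₀ → e x y = -g x y v₀ :=
        fun x y hxy hx hy => by simp [he, hxy, hx, hy]
      refine ⟨e, ⟨?_, ?_⟩, ?_⟩
      · intro x y
        by_cases hxy : x = y
        · rw [hxy, eself]; ring
        · by_cases hx : x = v₀
          · by_cases hy : y = v₀
            · exact absurd (hx.trans hy.symm) hxy
            · simp [hx, e_v₀ y hy, ev₀ y hy]
          · by_cases hy : y = v₀
            · rw [hy, ev₀ x hx, e_v₀ x hx]; norm_num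
            · rw [egen y x (fun h => hxy h.symm) hy hx, egen x y hxy hx hy,
                alt1 x y v₀]
      · intro x y hxy
        by_cases hx : x = v₀
        · rw [hx, ev₀ y (fun h => hxy (hx.trans h.symm))]; left; rfl
        · by_cases hy : y = v₀
          · rw [hy, e_v₀ x hx]; right; rfl
          · rw [egen x y hxy hx hy]
            rcases val x y v₀ hxy hy hx with h | h <;> simp [h]
      · funext x y z
        show e x y * e y z * e z x = g x y z
        by_cases hxy : x = y
        · rw [hxy, eself, g0a]; ring
        · by_cases hyz : y = z
          · rw [hyz, eself, g0b]; ring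
          · by_cases hxz : x = z
            · rw [hxz, eself, g0c]; ring
            · by_cases hx : x = v₀
              · have hy : y ≠ v₀ := fun h => hxy (hx.trans h.symm)
                have hz : z ≠ v₀ := fun h => hxz (hx.trans h.symm)
                rw [hx, ev₀ y hy, e_v₀ z hz, egen y z hyz hy hz, gcyc v₀ y z]
                ring
              · by_cases hy : y = v₀
                · have hz : z ≠ v₀ := fun h => hyz (hy.trans h.symm)
                  rw [hy, e_v₀ x hx, ev₀ z hz, egen z x (fun h => hxz h.symm) hz hx]
                  have h1 := alt1 v₀ x z
                  have h2 := gcyc v₀ x z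
                  have h3 := alt1 z x v₀
                  ring_nf
                  linarith
                · by_cases hz : z = v₀
                  · rw [hz, egen x y hxy hx hy, e_v₀ y hy, ev₀ x hx]
                    ring
                  · rw [egen x y hxy hx hy, egen y z hyz hy hz,
                      egen z x (fun h => hxz h.symm) hz hx]
                    have hc := coc x y z v₀ hxy hxz hx hyz hy hz
                    rw [alt1 x y v₀, alt1 y z v₀, alt1 z x v₀] at hc
                    rcases val x y v₀ hxy hy hx with p1 | p1 <;>
                      rcases val y z v₀ hyz hz hy with p2 | p2 <;>
                      rcases val z x v₀ (fun h => hxz h.symm) hx hz with p3 | p3 <;>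
                      rw [p1, p2, p3] at hc ⊢ <;> ring_nf at hc ⊢ <;> omega
    · refine ⟨fun _ _ => 0, ⟨fun x _ => by simp, fun x _ _ => (hV ⟨x⟩).elim⟩,
        funext fun x => (hV ⟨x⟩).elim⟩
end

section
/- Let C be a switching class of tournaments on a finite vertex set V and let T1, …, Tk be a complete set of representatives of the isomorphism classes of tournaments in C. Then ∑_{i=1}^k 1/|Aut(T_i)| = 2^{|V|−1} / |Aut(C)|. -/
def autT {V : Type*} (e : V → V → ℤ) : Set (Equiv.Perm V) :=
  {σ | ∀ x y, e (σ x) (σ y) = e x y}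

def autG {V : Type*} (g : V → V → V → ℤ) : Set (Equiv.Perm V) :=
  {σ | ∀ x y z, g (σ x) (σ y) (σ z) = g x y z}

def TournIso {V₁ V₂ : Type*} (e₁ : V₁ → V₁ → ℤ) (e₂ : V₂ → V₂ → ℤ) : Prop :=
  ∃ φ : V₁ ≃ V₂, ∀ x y, e₂ (φ x) (φ y) = e₁ x y

section Aux
variable {V : Type*}

noncomputable def permAct (σ : Equiv.Perm V) (e : V → V → ℤ) : V → V → ℤ :=
  fun x y => e (σ.symm x) (σ.symm y)

lemma permAct_one (e : V → V → ℤ) : permAct 1 e = e := rfl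

lemma permAct_mul (σ τ : Equiv.Perm V) (e : V → V → ℤ) :
    permAct (σ * τ) e = permAct σ (permAct τ e) := by
  funext x y
  simp [permAct, Equiv.Perm.mul_def, Equiv.symm_trans_apply]

lemma permAct_apply (σ : Equiv.Perm V) (e : V → V → ℤ) (x y : V) :
    permAct σ e (σ x) (σ y) = e x y := by simp [permAct]

lemma mem_autT_iff (σ : Equiv.Perm V) (e : V → V → ℤ) :
    σ ∈ autT e ↔ permAct σ e = e := by
  constructor
  · intro h; funext x y
    simpa [permAct] using (h (σ.symm x) (σ.symm y)).symm
  · intro h x y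
    have := congrFun (congrFun h (σ x)) (σ y)
    simpa [permAct] using this.symm

lemma tournIso_iff (e e' : V → V → ℤ) :
    TournIso e e' ↔ ∃ σ : Equiv.Perm V, permAct σ e = e' := by
  constructor
  · rintro ⟨φ, hφ⟩
    refine ⟨φ, ?_⟩
    funext x y
    simpa [permAct] using (hφ (φ.symm x) (φ.symm y)).symm
  · rintro ⟨σ, hσ⟩
    refine ⟨σ, fun x y => ?_⟩
    rw [← hσ]; simp [permAct]

lemma IsTournament.diag {e : V → V → ℤ} (h : IsTournament e) (x : V) : e x x = 0 := by
  have := h.1 x x; omega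

lemma IsTournament.permAct {e : V → V → ℤ} (h : IsTournament e) (σ : Equiv.Perm V) :
    IsTournament (_root_.permAct σ e) := by
  refine ⟨fun x y => h.1 _ _, fun x y hxy => h.2 _ _ ?_⟩
  simpa using fun hn => hxy (σ.symm.injective hn)

lemma IsTournament.switch {e : V → V → ℤ} (h : IsTournament e) (X : Set V) :
    IsTournament (switchT e X) := by
  constructor
  · intro x y
    by_cases hx : x ∈ X <;> by_cases hy : y ∈ X <;>
      simp [switchT, hx, hy, h.1 x y]
  · intro x y hxy
    rcases h.2 x y hxy with h'|h' <;>
      by_cases hx : x ∈ X <;> by_cases hy : y ∈ X <;>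
        simp [switchT, hx, hy, h']

lemma gT_switch (e : V → V → ℤ) (X : Set V) : gT (switchT e X) = gT e := by
  funext x y z
  by_cases hx : x ∈ X <;> by_cases hy : y ∈ X <;> by_cases hz : z ∈ X <;>
    simp [gT, switchT, hx, hy, hz]

lemma SwitchEquiv.gT_eq {e e' : V → V → ℤ} (h : SwitchEquiv e e') : gT e' = gT e := by
  obtain ⟨X, rfl⟩ := h; exact gT_switch e X

lemma SwitchEquiv.isTournament {e e' : V → V → ℤ} (h : IsTournament e)
    (hs : SwitchEquiv e e') : IsTournament e' := by
  obtain ⟨X, rfl⟩ := hs; exact IsTournament.switch h X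


lemma pm_neq {a b : ℤ} (ha : a = 1 ∨ a = -1) (hb : b = 1 ∨ b = -1) (h : a ≠ b) :
    a = -b := by omega

lemma switchEquiv_of_gT_eq {e e' : V → V → ℤ} (h : IsTournament e)
    (h' : IsTournament e') (hg : gT e' = gT e) : SwitchEquiv e e' := by
  by_cases hV : Nonempty V
  · obtain ⟨x₀⟩ := hV
    refine ⟨{x | e' x₀ x ≠ e x₀ x}, ?_⟩
    funext x y
    by_cases hxy : x = y
    · subst hxy
      simp [switchT, IsTournament.diag h, IsTournament.diag h']
    by_cases hx0 : x = x₀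
    · subst hx0
      have hd : ¬ (e' x x ≠ e x x) := by
        simp [IsTournament.diag h, IsTournament.diag h']
      by_cases hy : e' x y ≠ e x y
      · simp only [switchT, Set.mem_setOf_eq]
        rw [if_neg (by tauto)]
        exact pm_neq (h'.2 x y hxy) (h.2 x y hxy) hy
      · simp only [switchT, Set.mem_setOf_eq]
        rw [if_pos (by tauto)]
        omega
    by_cases hy0 : y = x₀
    · subst hy0
      have hd : ¬ (e' y y ≠ e y y) := by
        simp [IsTournament.diag h, IsTournament.diag h']
      have h1 : e' x y = - e' y x := h'.1 y x
      have h2 : e x y = - e y x := h.1 y x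
      by_cases hx : e' y x ≠ e y x
      · simp only [switchT, Set.mem_setOf_eq]
        rw [if_neg (by tauto)]
        have := pm_neq (h'.2 y x (Ne.symm hxy)) (h.2 y x (Ne.symm hxy)) hx
        omega
      · simp only [switchT, Set.mem_setOf_eq]
        rw [if_pos (by tauto)]
        omega
    · -- x, y, x₀ pairwise distinct
      have key : e' x₀ x * e' x y * e' y x₀ = e x₀ x * e x y * e y x₀ :=
        congrFun (congrFun (congrFun hg x₀) x) y
      rw [h'.1 x₀ y, h.1 x₀ y] at key
      have ha' := h'.2 x₀ x (fun hh => hx0 hh.symm)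
      have ha := h.2 x₀ x (fun hh => hx0 hh.symm)
      have hc' := h'.2 x₀ y (fun hh => hy0 hh.symm)
      have hc := h.2 x₀ y (fun hh => hy0 hh.symm)
      have hb' := h'.2 x y hxy
      have hb := h.2 x y hxy
      simp only [switchT, Set.mem_setOf_eq]
      by_cases hcond : (e' x₀ x ≠ e x₀ x) ↔ (e' x₀ y ≠ e x₀ y)
      on_goal 1 => rw [if_pos hcond]
      on_goal 2 => rw [if_neg hcond]
      all_goals revert key hcond
      all_goals
        generalize e' x₀ x = a' at ha' ⊢
        generalize e x₀ x = a at ha ⊢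
        generalize e' x₀ y = c' at hc' ⊢
        generalize e x₀ y = c at hc ⊢
        generalize e' x y = b' at hb' ⊢
        generalize e x y = b at hb ⊢
        intro key hcond
      all_goals
        rcases ha' with rfl|rfl <;> rcases ha with rfl|rfl <;>
          rcases hc' with rfl|rfl <;> rcases hc with rfl|rfl <;>
            rcases hb' with rfl|rfl <;> rcases hb with rfl|rfl <;>
              simp_all
  · refine ⟨∅, ?_⟩
    funext x
    exact absurd ⟨x⟩ hV

open scoped Classical

lemma autT_one (e : V → V → ℤ) : (1 : Equiv.Perm V) ∈ autT e := by
  intro x y; simp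

lemma autG_one (g : V → V → V → ℤ) : (1 : Equiv.Perm V) ∈ autG g := by
  intro x y z; simp

lemma autG_mul {g : V → V → V → ℤ} {σ τ : Equiv.Perm V} (hσ : σ ∈ autG g)
    (hτ : τ ∈ autG g) : σ * τ ∈ autG g := by
  intro x y z
  simpa [Equiv.Perm.mul_apply] using (hσ (τ x) (τ y) (τ z)).trans (hτ x y z)

lemma gT_permAct (σ : Equiv.Perm V) (e : V → V → ℤ) (x y z : V) :
    gT (permAct σ e) x y z = gT e (σ.symm x) (σ.symm y) (σ.symm z) := rfl

lemma autG_symm_eq {g : V → V → V → ℤ} {σ : Equiv.Perm V} (hσ : σ ∈ autG g) (x y z : V) :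
    g (σ.symm x) (σ.symm y) (σ.symm z) = g x y z := by
  have := hσ (σ.symm x) (σ.symm y) (σ.symm z)
  simpa using this.symm

lemma gT_permAct_eq {e₂ : V → V → ℤ} {σ : Equiv.Perm V} (hσ : σ ∈ autG (gT e₂))
    {e : V → V → ℤ} (he : gT e = gT e₂) : gT (permAct σ e) = gT e₂ := by
  funext x y z
  rw [gT_permAct, he, autG_symm_eq hσ]

lemma mem_autG_of_permAct {e₂ e e' : V → V → ℤ} {σ : Equiv.Perm V}
    (he : gT e = gT e₂) (he' : gT e' = gT e₂) (hσ : permAct σ e = e') :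
    σ ∈ autG (gT e₂) := by
  intro x y z
  have h1 : gT e₂ (σ x) (σ y) (σ z) = gT e' (σ x) (σ y) (σ z) := by rw [he']
  rw [h1, ← hσ, gT_permAct]
  simp [he]

lemma switchT_compl (e : V → V → ℤ) (X : Set V) : switchT e Xᶜ = switchT e X := by
  funext x y
  simp only [switchT, Set.mem_compl_iff]
  by_cases hx : x ∈ X <;> by_cases hy : y ∈ X <;> simp [hx, hy]

lemma switchT_eq_cases {e : V → V → ℤ} (h : IsTournament e) {X Y : Set V} (x₀ : V)
    (heq : switchT e X = switchT e Y) : X = Y ∨ X = Yᶜ := by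
  have hP : ∀ x, ((x ∈ X ↔ x ∈ Y) ↔ (x₀ ∈ X ↔ x₀ ∈ Y)) := by
    intro x
    by_cases hx : x = x₀
    · subst hx; tauto
    · have hthis := congrFun (congrFun heq x₀) x
      simp only [switchT] at hthis
      rcases h.2 x₀ x (fun hh => hx hh.symm) with he|he <;> rw [he] at hthis <;>
        by_cases h1 : (x₀ ∈ X ↔ x ∈ X) <;> by_cases h2 : (x₀ ∈ Y ↔ x ∈ Y) <;>
          simp [h1, h2] at hthis <;> tauto
  by_cases h0 : x₀ ∈ X ↔ x₀ ∈ Y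
  · left; ext x; have := hP x; tauto
  · right; ext x; have := hP x; simp only [Set.mem_compl_iff]; tauto

end Aux

/-- let `C` be the switching class of a tournament `T₁ = e₁` on a finite
vertex set `V` and let `T 0, …, T (k-1)` be a complete set of representatives of the
isomorphism classes of tournaments in `C` (members of `C`, pairwise non-isomorphic, and
every member of `C` is isomorphic to some `T i`).  Then
`∑ i, 1/|Aut(T i)| = 2^(|V|-1) / |Aut(C)|`. -/
theorem statement4 {V : Type*} [Fintype V] (e₁ : V → V → ℤ) (h₁ : IsTournament e₁)
    (k : ℕ) (T : Fin k → V → V → ℤ)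
    (hmem : ∀ i, SwitchEquiv e₁ (T i))
    (hrep : ∀ i j, TournIso (T i) (T j) → i = j)
    (hcompl : ∀ e : V → V → ℤ, SwitchEquiv e₁ e → ∃ i, TournIso (T i) e) :
    ∑ i, (1 : ℚ) / ((autT (T i)).ncard : ℚ) =
      (2 : ℚ) ^ (Fintype.card V - 1) / ((autG (gT e₁)).ncard : ℚ) := by
  classical
  have hgTi : ∀ i, gT (T i) = gT e₁ := fun i => (hmem i).gT_eq
  have hTt : ∀ i, IsTournament (T i) := fun i => (hmem i).isTournament h₁
  set A : Finset (Equiv.Perm V) := Set.toFinset (autG (gT e₁)) with hA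
  set Ai : Fin k → Finset (Equiv.Perm V) := fun i => Set.toFinset (autT (T i)) with hAi
  set Ci : Fin k → Finset (V → V → ℤ) := fun i => A.image (fun σ => permAct σ (T i)) with hCi
  set CF : Finset (V → V → ℤ) :=
    (Finset.univ : Finset (Finset V)).image (fun X : Finset V => switchT e₁ (↑X : Set V)) with hCF
  -- membership characterizations
  have memA : ∀ σ, σ ∈ A ↔ σ ∈ autG (gT e₁) := fun σ => Set.mem_toFinset
  have memAi : ∀ i σ, σ ∈ Ai i ↔ σ ∈ autT (T i) := fun i σ => Set.mem_toFinset
  have memCF : ∀ e, e ∈ CF ↔ SwitchEquiv e₁ e := by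
    intro e
    constructor
    · rw [hCF]
      intro he
      obtain ⟨X, _, hX⟩ := Finset.mem_image.mp he
      exact ⟨(X : Set V), hX.symm⟩
    · rintro ⟨X, rfl⟩
      rw [hCF]
      refine Finset.mem_image.mpr ⟨X.toFinset, Finset.mem_univ _, ?_⟩
      rw [Set.coe_toFinset]
  -- switching-equivalent iff tournament with same g
  have memC' : ∀ e, SwitchEquiv e₁ e ↔ (IsTournament e ∧ gT e = gT e₁) := by
    intro e
    constructor
    · intro hs; exact ⟨hs.isTournament h₁, hs.gT_eq⟩
    · rintro ⟨ht, hg⟩; exact switchEquiv_of_gT_eq h₁ ht hg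
  -- σ ∈ A implies permAct σ (T i) is in the switching class
  have factA : ∀ i σ, σ ∈ A → SwitchEquiv e₁ (permAct σ (T i)) := by
    intro i σ hσ
    rw [memA] at hσ
    exact (memC' _).mpr ⟨(hTt i).permAct σ, gT_permAct_eq hσ (hgTi i)⟩
  -- converse: an iso from T i to a member of the class lies in A
  have factB : ∀ i σ e, SwitchEquiv e₁ e → permAct σ (T i) = e → σ ∈ A := by
    intro i σ e hs hσ
    rw [memA]
    exact mem_autG_of_permAct (hgTi i) ((memC' e).mp hs).2 hσ
  -- Ci i ⊆ CF and CF is the disjoint union of the Ci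
  have hCFeq : CF = Finset.univ.biUnion Ci := by
    ext e
    simp only [Finset.mem_biUnion, Finset.mem_univ, true_and]
    rw [memCF]
    constructor
    · intro hs
      obtain ⟨i, hi⟩ := hcompl e hs
      obtain ⟨σ, hσ⟩ := (tournIso_iff _ _).mp hi
      exact ⟨i, Finset.mem_image.mpr ⟨σ, factB i σ e hs hσ, hσ⟩⟩
    · rintro ⟨i, hi⟩
      obtain ⟨σ, hσA, hσ⟩ := Finset.mem_image.mp hi
      rw [← hσ]
      exact factA i σ hσA
  have hdisj : ∀ i ∈ (Finset.univ : Finset (Fin k)), ∀ j ∈ Finset.univ, i ≠ j →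
      Disjoint (Ci i) (Ci j) := by
    intro i _ j _ hij
    rw [Finset.disjoint_left]
    intro e hei hej
    obtain ⟨σ, _, hσ⟩ := Finset.mem_image.mp hei
    obtain ⟨τ, _, hτ⟩ := Finset.mem_image.mp hej
    refine hij (hrep i j ((tournIso_iff _ _).mpr ⟨τ⁻¹ * σ, ?_⟩))
    rw [permAct_mul, hσ, ← hτ, ← permAct_mul, inv_mul_cancel, permAct_one]
  have hsumCF : CF.card = ∑ i, (Ci i).card := by
    rw [hCFeq, Finset.card_biUnion hdisj]
  -- orbit-stabilizer: A.card = (Ci i).card * (Ai i).card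
  have fact4 : ∀ i, A.card = (Ci i).card * (Ai i).card := by
    intro i
    have hmaps : ∀ σ ∈ A, permAct σ (T i) ∈ Ci i := by
      intro σ hσ; exact Finset.mem_image.mpr ⟨σ, hσ, rfl⟩
    rw [Finset.card_eq_sum_card_fiberwise hmaps]
    have hfib : ∀ e ∈ Ci i, (A.filter fun σ => permAct σ (T i) = e).card = (Ai i).card := by
      intro e he
      obtain ⟨σ₀, hσ₀A, hσ₀⟩ := Finset.mem_image.mp he
      -- fiber over e is the left coset σ₀ * (Ai i)
      refine (Finset.card_bij (fun τ _ => σ₀ * τ) ?_ ?_ ?_).symm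
      · intro τ hτ
        rw [memAi] at hτ
        have hτA : τ ∈ A := by
          rw [memA]
          intro x y z
          have h2 : gT (T i) (τ x) (τ y) (τ z) = gT (T i) x y z := by
            simp only [gT]
            rw [hτ x y, hτ y z, hτ z x]
          rw [← hgTi i, h2, hgTi i]
        refine Finset.mem_filter.mpr ⟨?_, ?_⟩
        · rw [memA]
          rw [memA] at hσ₀A hτA
          exact autG_mul hσ₀A hτA
        · rw [permAct_mul, (mem_autT_iff τ (T i)).mp hτ, hσ₀]
      · intro τ₁ _ τ₂ _ hst
        exact mul_left_cancel hst
      · intro σ hσf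
        obtain ⟨hσA, hσe⟩ := Finset.mem_filter.mp hσf
        refine ⟨σ₀⁻¹ * σ, ?_, by group⟩
        rw [memAi, mem_autT_iff]
        rw [permAct_mul, hσe, ← hσ₀, ← permAct_mul, inv_mul_cancel, permAct_one]
    rw [Finset.sum_congr rfl hfib, Finset.sum_const, smul_eq_mul]
  -- cardinality of the switching class
  have hCFcard : CF.card = 2 ^ (Fintype.card V - 1) := by
    rcases Nat.eq_zero_or_pos (Fintype.card V) with hn | hn
    · have hle : CF.card ≤ 1 := by
        calc CF.card ≤ (Finset.univ : Finset (Finset V)).card := Finset.card_image_le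
        _ = 2 ^ (Fintype.card V) := by simp [Fintype.card_finset]  -- card univ?
        _ = 1 := by rw [hn]; rfl
      have hge : 1 ≤ CF.card := by
        refine Finset.card_pos.mpr ⟨switchT e₁ (∅ : Finset V), ?_⟩
        exact Finset.mem_image.mpr ⟨∅, Finset.mem_univ _, rfl⟩
      rw [hn]
      omega
    · obtain ⟨x₀⟩ : Nonempty V := Fintype.card_pos_iff.mp hn
      have hfib : ∀ e ∈ CF,
          ((Finset.univ : Finset (Finset V)).filter (fun X : Finset V => switchT e₁ (↑X : Set V) = e)).card = 2 := by
        intro e he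
        obtain ⟨X₀, _, hX₀⟩ := Finset.mem_image.mp he
        have : (Finset.univ : Finset (Finset V)).filter (fun X : Finset V => switchT e₁ (↑X : Set V) = e)
            = {X₀, X₀ᶜ} := by
          ext X
          simp only [Finset.mem_filter, Finset.mem_univ, true_and, Finset.mem_insert,
            Finset.mem_singleton]
          constructor
          · intro hX
            have := switchT_eq_cases h₁ x₀ (X := (X : Set V)) (Y := (X₀ : Set V))
              (by rw [hX, hX₀])
            rcases this with h | h
            · left; exact_mod_cast Finset.coe_injective h
            · right
              apply Finset.coe_injective
              rw [h, Finset.coe_compl]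
          · rintro (rfl | rfl)
            · exact hX₀
            · rw [Finset.coe_compl, switchT_compl, hX₀]
        rw [this]
        refine Finset.card_pair ?_
        intro hc
        by_cases hx : x₀ ∈ X₀
        · have : x₀ ∈ X₀ᶜ := hc ▸ hx
          simp [Finset.mem_compl, hx] at this
        · have : x₀ ∈ X₀ := by
            have h2 : x₀ ∈ X₀ᶜ := Finset.mem_compl.mpr hx
            rw [← hc] at h2; exact h2
          exact hx this
      have hcount : (Finset.univ : Finset (Finset V)).card = CF.card * 2 := by
        rw [Finset.card_eq_sum_card_fiberwise
          (f := fun X : Finset V => switchT e₁ (↑X : Set V)) (t := CF)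
          (fun X _ => Finset.mem_image.mpr ⟨X, Finset.mem_univ _, rfl⟩)]
        rw [Finset.sum_congr rfl hfib, Finset.sum_const, smul_eq_mul]
      have huniv : (Finset.univ : Finset (Finset V)).card = 2 ^ (Fintype.card V) := by
        simp [Fintype.card_finset]
      have hpow : 2 ^ (Fintype.card V) = 2 ^ (Fintype.card V - 1) * 2 := by
        rw [← pow_succ]
        congr 1
        omega
      omega
  -- positivity
  have hAipos : ∀ i, 0 < (Ai i).card := by
    intro i
    refine Finset.card_pos.mpr ⟨1, ?_⟩
    rw [memAi]; exact autT_one (T i)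
  have hApos : 0 < A.card := by
    refine Finset.card_pos.mpr ⟨1, ?_⟩
    rw [memA]; exact autG_one _
  have hCipos : ∀ i, 0 < (Ci i).card := by
    intro i
    refine Finset.card_pos.mpr (Finset.Nonempty.image ?_ _)
    exact ⟨1, by rw [memA]; exact autG_one _⟩
  -- rewrite ncards
  have hncard1 : ∀ i, (autT (T i)).ncard = (Ai i).card := by
    intro i; rw [Set.ncard_eq_toFinset_card']
  have hncard2 : (autG (gT e₁)).ncard = A.card := Set.ncard_eq_toFinset_card' _
  simp only [hncard1, hncard2]
  -- final computation
  have step1 : ∀ i : Fin k, (1 : ℚ) / ((Ai i).card : ℚ) = ((Ci i).card : ℚ) / (A.card : ℚ) := by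
    intro i
    have h4 : (A.card : ℚ) = ((Ci i).card : ℚ) * ((Ai i).card : ℚ) := by
      exact_mod_cast congrArg (Nat.cast : ℕ → ℚ) (fact4 i)
    have hc : ((Ci i).card : ℚ) ≠ 0 := by
      exact_mod_cast (hCipos i).ne'
    have ha : ((Ai i).card : ℚ) ≠ 0 := by
      exact_mod_cast (hAipos i).ne'
    rw [h4]
    field_simp
  calc ∑ i, (1 : ℚ) / ((Ai i).card : ℚ)
      = ∑ i, ((Ci i).card : ℚ) / (A.card : ℚ) := Finset.sum_congr rfl (fun i _ => step1 i)
    _ = ((∑ i, (Ci i).card : ℕ) : ℚ) / (A.card : ℚ) := by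
        rw [← Finset.sum_div]
        push_cast
        ring
    _ = ((CF.card : ℕ) : ℚ) / (A.card : ℚ) := by rw [← hsumCF]
    _ = (2 : ℚ) ^ (Fintype.card V - 1) / (A.card : ℚ) := by
        rw [hCFcard]
        push_cast
        ring
end

section
/- Let q ≡ 3 (mod 4) be a prime power. The function g on the projective line P¹(F_q), defined on triples of distinct projective points by g(x̄,ȳ,z̄) = χ(det(x:y)·det(y:z)·det(z:x)) for any choice of representatives x,y,z ∈ F_q²∖{0} (where det(x:y) is the determinant of the 2×2 matrix with rows x and y), is well-defined (independent of representatives), is an oriented two-graph on P¹(F_q), and is isomorphic to the Paley oriented two-graph g_q. -/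
open scoped Classical in
/-- The quadratic character `χ` of a finite field. -/
noncomputable def chi {F : Type*} [Field F] [Fintype F] (x : F) : ℤ :=
  if x = 0 then 0 else if IsSquare x then 1 else -1

/-- The sign function of the augmented Paley tournament `T_χ⁺` on `F ∪ {∞}`:
on `F` we have the Paley tournament (edge `(x,y)` iff `χ(y-x) = 1`), and every edge
between `F` and `∞` is directed towards `∞`. -/
noncomputable def paleyAug (F : Type*) [Field F] [Fintype F] :
    Option F → Option F → ℤ
  | some a, some b => chi (b - a)
  | some _, none => 1
  | none, some _ => -1
  | none, none => 0

/-- `det(x : y)`, the determinant of the 2×2 matrix with rows `x` and `y`. -/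
def det2 {F : Type*} [Field F] (x y : Fin 2 → F) : F :=
  x 0 * y 1 - x 1 * y 0

section Helpers

variable {F : Type*} [Field F] [Fintype F]

lemma chi_eq_quadraticChar (x : F) :
    chi x = letI := Classical.decEq F; quadraticChar F x := by
  letI := Classical.decEq F
  rw [quadraticChar_apply, quadraticCharFun, chi]

lemma chi_zero : chi (0 : F) = 0 := by simp [chi]

lemma chi_one : chi (1 : F) = 1 := by simp [chi]

lemma chi_mul (a b : F) : chi (a * b) = chi a * chi b := by
  letI := Classical.decEq F
  rw [chi_eq_quadraticChar, chi_eq_quadraticChar, chi_eq_quadraticChar]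
  exact map_mul (quadraticChar F) a b

lemma chi_neg_one (hq : Fintype.card F % 4 = 3) : chi (-1 : F) = -1 := by
  rw [chi, if_neg (by simp), if_neg]
  rw [FiniteField.isSquare_neg_one_iff]
  simp [hq]

lemma chi_neg (hq : Fintype.card F % 4 = 3) (a : F) : chi (-a) = - chi a := by
  rw [← neg_one_mul, chi_mul, chi_neg_one hq, neg_one_mul]

lemma chi_sq (a : F) (ha : a ≠ 0) : chi (a * a) = 1 := by
  rw [chi, if_neg (mul_ne_zero ha ha), if_pos ⟨a, rfl⟩]

lemma chi_pm (a : F) (ha : a ≠ 0) : chi a = 1 ∨ chi a = -1 := by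
  rw [chi, if_neg ha]
  split_ifs <;> simp

lemma det2_antisymm (x y : Fin 2 → F) : det2 y x = - det2 x y := by
  unfold det2; ring

lemma det2_smul_smul (a b : F) (x y : Fin 2 → F) :
    det2 (a • x) (b • y) = a * b * det2 x y := by
  simp only [det2, Pi.smul_apply, smul_eq_mul]; ring

lemma mk_eq_of_det2_eq_zero {x y : Fin 2 → F} (hx : x ≠ 0) (hy : y ≠ 0)
    (h : det2 x y = 0) : Projectivization.mk F x hx = Projectivization.mk F y hy := by
  rw [Projectivization.mk_eq_mk_iff']
  have h' : x 0 * y 1 = x 1 * y 0 := by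
    have := sub_eq_zero.mp h; exact this
  by_cases h0 : y 0 = 0
  · have h1 : y 1 ≠ 0 := by
      intro h1
      exact hy (funext fun i => by fin_cases i <;> simp [h0, h1])
    have hx0 : x 0 = 0 := by
      have := h'
      rw [h0, mul_zero] at this
      exact (mul_eq_zero.mp this).resolve_right h1
    refine ⟨x 1 / y 1, funext fun i => ?_⟩
    fin_cases i <;> simp [Pi.smul_apply, smul_eq_mul, h0, hx0, div_mul_cancel₀, h1]
  · refine ⟨x 0 / y 0, funext fun i => ?_⟩
    fin_cases i
    · simp [Pi.smul_apply, smul_eq_mul, div_mul_cancel₀, h0]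
    · show x 0 / y 0 * y 1 = x 1
      rw [div_mul_eq_mul_div, div_eq_iff h0]
      linear_combination h'

lemma det2_rep_ne_zero {p q : Projectivization F (Fin 2 → F)} (h : p ≠ q) :
    det2 p.rep q.rep ≠ 0 := by
  intro hd
  exact h (by
    conv_lhs => rw [← p.mk_rep]
    conv_rhs => rw [← q.mk_rep]
    exact mk_eq_of_det2_eq_zero p.rep_nonzero q.rep_nonzero hd)

end Helpers

/-- for a finite field of order `q ≡ 3 (mod 4)`, there is a (well-defined)
function `g` on the projective line `P¹(F_q)` with
`g(x̄,ȳ,z̄) = χ(det(x:y)·det(y:z)·det(z:x))` for any representatives `x, y, z`; it is an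
oriented two-graph, and it is isomorphic to the Paley oriented two-graph
`g_q = g_{T_χ⁺}`. -/
theorem statement6 (F : Type*) [Field F] [Fintype F] (hq : Fintype.card F % 4 = 3) :
    ∃ g : Projectivization F (Fin 2 → F) → Projectivization F (Fin 2 → F) →
        Projectivization F (Fin 2 → F) → ℤ,
      (∀ (x y z : Fin 2 → F) (hx : x ≠ 0) (hy : y ≠ 0) (hz : z ≠ 0),
        g (Projectivization.mk F x hx) (Projectivization.mk F y hy)
            (Projectivization.mk F z hz) =
          chi (det2 x y * det2 y z * det2 z x)) ∧
      IsOrientedTwoGraph g ∧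
      ∃ φ : Option F ≃ Projectivization F (Fin 2 → F),
        ∀ a b c : Option F, g (φ a) (φ b) (φ c) = gT (paleyAug F) a b c := by
  classical
  let g : Projectivization F (Fin 2 → F) → Projectivization F (Fin 2 → F) →
      Projectivization F (Fin 2 → F) → ℤ :=
    fun p q r => chi (det2 p.rep q.rep * det2 q.rep r.rep * det2 r.rep p.rep)
  have hrep : ∀ (x y z : Fin 2 → F) (hx : x ≠ 0) (hy : y ≠ 0) (hz : z ≠ 0),
      g (Projectivization.mk F x hx) (Projectivization.mk F y hy)
          (Projectivization.mk F z hz) =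
        chi (det2 x y * det2 y z * det2 z x) := by
    intro x y z hx hy hz
    obtain ⟨a, ha⟩ := Projectivization.exists_smul_eq_mk_rep F x hx
    obtain ⟨b, hb⟩ := Projectivization.exists_smul_eq_mk_rep F y hy
    obtain ⟨c, hc⟩ := Projectivization.exists_smul_eq_mk_rep F z hz
    show chi _ = _
    rw [← ha, ← hb, ← hc]
    simp only [Units.smul_def]
    rw [det2_smul_smul, det2_smul_smul, det2_smul_smul]
    have h : (a : F) * b * det2 x y * ((b : F) * c * det2 y z) *
        ((c : F) * a * det2 z x) =
        ((a : F) * b * c) * ((a : F) * b * c) * (det2 x y * det2 y z * det2 z x) := by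
      ring
    rw [h, chi_mul, chi_sq _ (mul_ne_zero (mul_ne_zero a.ne_zero b.ne_zero) c.ne_zero), one_mul]
  refine ⟨g, hrep, ⟨?_, ?_, ?_, ?_⟩, ?_⟩
  · intro x y z
    show chi _ = - chi _
    have h : det2 y.rep x.rep * det2 x.rep z.rep * det2 z.rep y.rep =
        -(det2 x.rep y.rep * det2 y.rep z.rep * det2 z.rep x.rep) := by
      unfold det2; ring
    rw [h, chi_neg hq]
  · intro x y z
    show chi _ = - chi _
    have h : det2 x.rep z.rep * det2 z.rep y.rep * det2 y.rep x.rep =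
        -(det2 x.rep y.rep * det2 y.rep z.rep * det2 z.rep x.rep) := by
      unfold det2; ring
    rw [h, chi_neg hq]
  · intro x y z hxy hyz hxz
    exact chi_pm _ (mul_ne_zero (mul_ne_zero (det2_rep_ne_zero hxy)
      (det2_rep_ne_zero hyz)) (det2_rep_ne_zero hxz.symm))
  · intro x y z w hxy hxz hxw hyz hyw hzw
    have Dxy := det2_rep_ne_zero hxy
    have Dxz := det2_rep_ne_zero hxz
    have Dxw := det2_rep_ne_zero hxw
    have Dyz := det2_rep_ne_zero hyz
    have Dyw := det2_rep_ne_zero hyw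
    have Dzw := det2_rep_ne_zero hzw
    show chi _ * chi _ * chi _ * chi _ = 1
    rw [← chi_mul, ← chi_mul, ← chi_mul]
    have key : det2 x.rep y.rep * det2 y.rep z.rep * det2 z.rep x.rep *
        (det2 y.rep x.rep * det2 x.rep w.rep * det2 w.rep y.rep) *
        (det2 z.rep y.rep * det2 y.rep w.rep * det2 w.rep z.rep) *
        (det2 x.rep z.rep * det2 z.rep w.rep * det2 w.rep x.rep) =
        (det2 x.rep y.rep * det2 y.rep z.rep * det2 x.rep z.rep * det2 x.rep w.rep *
          det2 y.rep w.rep * det2 z.rep w.rep) *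
        (det2 x.rep y.rep * det2 y.rep z.rep * det2 x.rep z.rep * det2 x.rep w.rep *
          det2 y.rep w.rep * det2 z.rep w.rep) := by
      unfold det2; ring
    rw [key]
    exact chi_sq _ (by
      apply mul_ne_zero; apply mul_ne_zero; apply mul_ne_zero; apply mul_ne_zero
      apply mul_ne_zero
      all_goals assumption)
  · have hv : ∀ a : F, (![1, a] : Fin 2 → F) ≠ 0 := fun a h => by
      simpa using congrFun h 0
    have he : (![0, 1] : Fin 2 → F) ≠ 0 := fun h => by simpa using congrFun h 1
    let f : Option F → Projectivization F (Fin 2 → F) := fun o =>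
      o.elim (Projectivization.mk F ![0, 1] he) fun a => Projectivization.mk F ![1, a] (hv a)
    have hinj : Function.Injective f := by
      intro o1 o2 h
      rcases o1 with _ | a <;> rcases o2 with _ | b
      · rfl
      · exfalso
        rw [show f none = Projectivization.mk F ![0,1] he from rfl,
          show f (some b) = Projectivization.mk F ![1,b] (hv b) from rfl,
          Projectivization.mk_eq_mk_iff'] at h
        obtain ⟨c, hc⟩ := h
        have h0 := congrFun hc 0
        have h1 := congrFun hc 1
        simp at h0 h1
        rw [h0] at h1
        simp at h1
      · exfalso
        rw [show f (some a) = Projectivization.mk F ![1,a] (hv a) from rfl,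
          show f none = Projectivization.mk F ![0,1] he from rfl,
          Projectivization.mk_eq_mk_iff'] at h
        obtain ⟨c, hc⟩ := h
        have h0 := congrFun hc 0
        simp at h0
      · rw [show f (some a) = Projectivization.mk F ![1,a] (hv a) from rfl,
          show f (some b) = Projectivization.mk F ![1,b] (hv b) from rfl,
          Projectivization.mk_eq_mk_iff'] at h
        obtain ⟨c, hc⟩ := h
        have h0 := congrFun hc 0
        have h1 := congrFun hc 1
        simp at h0 h1
        rw [h0, one_mul] at h1
        rw [h1]
    have hsurj : Function.Surjective f := by
      intro p
      induction p using Projectivization.ind with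
      | h v hvne =>
        by_cases h0 : v 0 = 0
        · have h1 : v 1 ≠ 0 := by
            intro h1
            exact hvne (funext fun i => by fin_cases i <;> simp [h0, h1])
          refine ⟨none, ?_⟩
          show Projectivization.mk F ![0,1] he = Projectivization.mk F v hvne
          rw [Projectivization.mk_eq_mk_iff']
          refine ⟨(v 1)⁻¹, funext fun i => ?_⟩
          fin_cases i
          · show (v 1)⁻¹ * v 0 = (0 : F)
            rw [h0, mul_zero]
          · show (v 1)⁻¹ * v 1 = (1 : F)
            exact inv_mul_cancel₀ h1
        · refine ⟨some (v 1 / v 0), ?_⟩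
          show Projectivization.mk F ![1, v 1 / v 0] _ = Projectivization.mk F v hvne
          rw [Projectivization.mk_eq_mk_iff']
          refine ⟨(v 0)⁻¹, funext fun i => ?_⟩
          fin_cases i
          · show (v 0)⁻¹ * v 0 = (1 : F)
            exact inv_mul_cancel₀ h0
          · show (v 0)⁻¹ * v 1 = v 1 / v 0
            rw [div_eq_inv_mul]
    refine ⟨Equiv.ofBijective f ⟨hinj, hsurj⟩, ?_⟩
    intro a b c
    have d1 : ∀ s t : F, det2 ![1, s] ![1, t] = t - s := by intro s t; simp [det2]
    have d2 : ∀ s : F, det2 ![1, s] ![0, 1] = 1 := by intro s; simp [det2]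
    have d3 : ∀ s : F, det2 ![0, 1] ![1, s] = -1 := by intro s; simp [det2]
    have d4 : det2 (![0, 1] : Fin 2 → F) ![0, 1] = 0 := by simp [det2]
    show g (f a) (f b) (f c) = gT (paleyAug F) a b c
    rcases a with _ | a <;> rcases b with _ | b <;> rcases c with _ | c <;>
      simp only [Option.elim, f] <;> rw [hrep] <;>
      simp only [gT, paleyAug, d1, d2, d3, d4, chi_mul] <;>
      simp [chi_zero, chi_one, chi_neg_one hq]
end

section
/- Let r ≥ 2 and let H be an r-uniform hypergraph on n vertices containing no copy of the r-triangle H(r), i.e., no set of r+1 vertices spans 3 or more edges. Then the number of edges of H is at most (n/r²)·C(n,r−1), with equality if and only if every set of r−1 vertices is contained in exactly n/r edges. -/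
open Finset

private lemma sum_sq_dev {ι : Type*} (s : Finset ι) (f : ι → ℚ) (c : ℚ) :
    ∑ i ∈ s, (f i - c)^2
      = (∑ i ∈ s, (f i)^2) - 2*c*(∑ i ∈ s, f i) + (s.card : ℚ) * c^2 := by
  induction s using Finset.cons_induction with
  | empty => simp
  | cons a s ha ih =>
    rw [Finset.sum_cons, Finset.sum_cons, Finset.sum_cons, ih, Finset.card_cons]
    push_cast
    ring

private lemma filter_powerset {V : Type*} [Fintype V] [DecidableEq V] (k : ℕ) (A : Finset V) :
    ((Finset.univ : Finset V).powersetCard k).filter (fun B => B ⊆ A) = A.powersetCard k := by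
  ext B
  simp only [Finset.mem_filter, Finset.mem_powersetCard, Finset.subset_univ, true_and]
  tauto

private lemma key_edge {V : Type*} [Fintype V] [DecidableEq V] (r : ℕ) (hr : 2 ≤ r)
    (H : Finset (Finset V)) (huniform : ∀ A ∈ H, A.card = r)
    (hfree : ∀ S : Finset V, S.card = r + 1 → (H.filter (fun A => A ⊆ S)).card ≤ 2)
    (A : Finset V) (hA : A ∈ H) :
    ∑ B ∈ A.powersetCard (r-1), (H.filter (fun A' => B ⊆ A')).card ≤ Fintype.card V := by
  classical
  have hAr : A.card = r := huniform A hA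
  have hAne : A.Nonempty := by rw [← Finset.card_pos, hAr]; omega
  obtain ⟨v, hv⟩ := hAne
  set D := (A.powersetCard (r-1)).sigma (fun B => H.filter (fun A' => B ⊆ A')) with hD
  set f : (Σ _ : Finset V, Finset V) → V :=
    fun p => if h : (p.2 \ p.1).Nonempty then h.choose else v with hf
  have hprop : ∀ p ∈ D, p.1 ⊆ A ∧ p.1.card = r - 1 ∧ p.2 ∈ H ∧ p.1 ⊆ p.2 := by
    intro p hp
    simp only [hD, Finset.mem_sigma, Finset.mem_powersetCard, Finset.mem_filter] at hp
    exact ⟨hp.1.1, hp.1.2, hp.2.1, hp.2.2⟩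
  have hwit : ∀ p ∈ D, p.2 = insert (f p) p.1 ∧ f p ∉ p.1 := by
    intro p hp
    obtain ⟨h1, h2, h3, h4⟩ := hprop p hp
    have hc : (p.2 \ p.1).card = 1 := by
      rw [Finset.card_sdiff_of_subset h4, huniform _ h3, h2]; omega
    have hne : (p.2 \ p.1).Nonempty := by rw [← Finset.card_pos, hc]; omega
    have hmem : f p ∈ p.2 \ p.1 := by
      simp only [hf]
      rw [dif_pos hne]
      exact hne.choose_spec
    obtain ⟨a, ha⟩ := Finset.card_eq_one.mp hc
    have hfa : f p = a := by rw [ha] at hmem; simpa using hmem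
    refine ⟨?_, (Finset.mem_sdiff.mp hmem).2⟩
    rw [Finset.insert_eq, hfa, ← ha, Finset.sdiff_union_of_subset h4]
  have hinj : Set.InjOn f D := by
    rintro ⟨pB, pA⟩ hp ⟨qB, qA⟩ hq hpq
    obtain ⟨hp1, hp2, hp3, hp4⟩ := hprop _ hp
    obtain ⟨hpw, hpn⟩ := hwit _ hp
    obtain ⟨hq1, hq2, hq3, hq4⟩ := hprop _ hq
    obtain ⟨hqw, hqn⟩ := hwit _ hq
    simp only at hp1 hp2 hp3 hp4 hpw hpn hq1 hq2 hq3 hq4 hqw hqn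
    rw [← hpq] at hqw hqn
    set y := f ⟨pB, pA⟩ with hy
    have hp1e : pB = pA.erase y := by rw [hpw, Finset.erase_insert hpn]
    have hq1e : qB = qA.erase y := by rw [hqw, Finset.erase_insert hqn]
    by_cases hyA : y ∈ A
    · -- then pA = A = qA
      have hApA : pA = A := by
        have hcp : (A \ pB).card = 1 := by
          rw [Finset.card_sdiff_of_subset hp1, hAr, hp2]; omega
        obtain ⟨a, ha⟩ := Finset.card_eq_one.mp hcp
        have hya : y = a := by
          have : y ∈ A \ pB := Finset.mem_sdiff.mpr ⟨hyA, hpn⟩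
          rw [ha] at this; simpa using this
        rw [hpw, Finset.insert_eq, hya, ← ha, Finset.sdiff_union_of_subset hp1]
      have hAqA : qA = A := by
        have hcq : (A \ qB).card = 1 := by
          rw [Finset.card_sdiff_of_subset hq1, hAr, hq2]; omega
        obtain ⟨a, ha⟩ := Finset.card_eq_one.mp hcq
        have hya : y = a := by
          have : y ∈ A \ qB := Finset.mem_sdiff.mpr ⟨hyA, hqn⟩
          rw [ha] at this; simpa using this
        rw [hqw, Finset.insert_eq, hya, ← ha, Finset.sdiff_union_of_subset hq1]
      have hBB : pB = qB := by rw [hp1e, hq1e, hApA, hAqA]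
      have hAA : pA = qA := by rw [hApA, hAqA]
      subst hBB; subst hAA; rfl
    · by_cases hBB : pB = qB
      · have hAA : pA = qA := by rw [hpw, hqw, hBB]
        subst hBB; subst hAA; rfl
      · exfalso
        have hAA : pA ≠ qA := fun h => hBB (by rw [hp1e, hq1e, h])
        have hyp : y ∈ pA := by rw [hpw]; exact Finset.mem_insert_self _ _
        have hyq : y ∈ qA := by rw [hqw]; exact Finset.mem_insert_self _ _
        have hpA_ne : pA ≠ A := fun h => hyA (h ▸ hyp)
        have hqA_ne : qA ≠ A := fun h => hyA (h ▸ hyq)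
        set T := insert y A with hT
        have hTcard : T.card = r + 1 := by
          rw [hT, Finset.card_insert_of_notMem hyA, hAr]
        have hsub : ({A, pA, qA} : Finset (Finset V)) ⊆ H.filter (fun X => X ⊆ T) := by
          intro X hX
          simp only [Finset.mem_insert, Finset.mem_singleton] at hX
          rcases hX with rfl | rfl | rfl
          · exact Finset.mem_filter.mpr ⟨hA, Finset.subset_insert _ _⟩
          · exact Finset.mem_filter.mpr ⟨hp3, by
              rw [hpw]; exact Finset.insert_subset_insert _ hp1⟩
          · exact Finset.mem_filter.mpr ⟨hq3, by
              rw [hqw]; exact Finset.insert_subset_insert _ hq1⟩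
        have hc3 : ({A, pA, qA} : Finset (Finset V)).card = 3 := by
          rw [Finset.card_insert_of_notMem (by
            simp only [Finset.mem_insert, Finset.mem_singleton]
            push_neg
            exact ⟨Ne.symm hpA_ne, Ne.symm hqA_ne⟩),
            Finset.card_insert_of_notMem (by simpa using hAA), Finset.card_singleton]
        have := Finset.card_le_card hsub
        have := hfree T hTcard
        omega
  calc ∑ B ∈ A.powersetCard (r-1), (H.filter (fun A' => B ⊆ A')).card
      = D.card := (Finset.card_sigma _ _).symm
    _ ≤ (Finset.univ : Finset V).card :=
        Finset.card_le_card_of_injOn f (fun p _ => Finset.mem_univ _) hinj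
    _ = Fintype.card V := Finset.card_univ

private lemma deg_sum {V : Type*} [Fintype V] [DecidableEq V] (r : ℕ) (hr : 2 ≤ r)
    (H : Finset (Finset V)) (huniform : ∀ A ∈ H, A.card = r) :
    ∑ B ∈ (Finset.univ : Finset V).powersetCard (r-1),
      (H.filter (fun A => B ⊆ A)).card = r * H.card := by
  classical
  have hchoose : r.choose (r-1) = r := by
    rw [← Nat.choose_symm (Nat.sub_le r 1)]
    have h1 : r - (r - 1) = 1 := by omega
    rw [h1, Nat.choose_one_right]
  calc ∑ B ∈ (Finset.univ : Finset V).powersetCard (r-1), (H.filter (fun A => B ⊆ A)).card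
      = ∑ B ∈ (Finset.univ : Finset V).powersetCard (r-1), ∑ A ∈ H, if B ⊆ A then 1 else 0 :=
        Finset.sum_congr rfl fun B _ => Finset.card_filter _ _
    _ = ∑ A ∈ H, ∑ B ∈ (Finset.univ : Finset V).powersetCard (r-1), if B ⊆ A then 1 else 0 :=
        Finset.sum_comm
    _ = ∑ A ∈ H, (((Finset.univ : Finset V).powersetCard (r-1)).filter (fun B => B ⊆ A)).card :=
        Finset.sum_congr rfl fun A _ => (Finset.card_filter _ _).symm
    _ = ∑ A ∈ H, r := by
        refine Finset.sum_congr rfl fun A hA => ?_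
        rw [filter_powerset, Finset.card_powersetCard, huniform A hA, hchoose]
    _ = r * H.card := by rw [Finset.sum_const, smul_eq_mul, mul_comm]

private lemma sq_deg_sum {V : Type*} [Fintype V] [DecidableEq V] (r : ℕ) (hr : 2 ≤ r)
    (H : Finset (Finset V)) (huniform : ∀ A ∈ H, A.card = r)
    (hfree : ∀ S : Finset V, S.card = r + 1 → (H.filter (fun A => A ⊆ S)).card ≤ 2) :
    ∑ B ∈ (Finset.univ : Finset V).powersetCard (r-1),
      (H.filter (fun A => B ⊆ A)).card ^ 2 ≤ Fintype.card V * H.card := by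
  classical
  calc ∑ B ∈ (Finset.univ : Finset V).powersetCard (r-1), (H.filter (fun A => B ⊆ A)).card ^ 2
      = ∑ B ∈ (Finset.univ : Finset V).powersetCard (r-1),
          ∑ A ∈ H, (if B ⊆ A then (H.filter (fun A' => B ⊆ A')).card else 0) := by
        refine Finset.sum_congr rfl fun B _ => ?_
        rw [← Finset.sum_filter, Finset.sum_const, smul_eq_mul, sq]
    _ = ∑ A ∈ H, ∑ B ∈ (Finset.univ : Finset V).powersetCard (r-1),
          (if B ⊆ A then (H.filter (fun A' => B ⊆ A')).card else 0) := Finset.sum_comm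
    _ = ∑ A ∈ H, ∑ B ∈ ((Finset.univ : Finset V).powersetCard (r-1)).filter (fun B => B ⊆ A),
          (H.filter (fun A' => B ⊆ A')).card := by
        simp [Finset.sum_filter]
    _ = ∑ A ∈ H, ∑ B ∈ A.powersetCard (r-1), (H.filter (fun A' => B ⊆ A')).card := by
        refine Finset.sum_congr rfl fun A _ => ?_
        rw [filter_powerset]
    _ ≤ ∑ A ∈ H, Fintype.card V :=
        Finset.sum_le_sum fun A hA => key_edge r hr H huniform hfree A hA
    _ = Fintype.card V * H.card := by rw [Finset.sum_const, smul_eq_mul, mul_comm]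

/-- let `r ≥ 2` and let `H` be an `r`-uniform hypergraph on a finite vertex
set `V` of size `n` containing no copy of the `r`-triangle `H(r)` (no `(r+1)`-set of
vertices spans 3 or more edges).  Then `|E(H)| ≤ (n/r²)·C(n,r-1)`, with equality iff
every set of `r-1` vertices is contained in exactly `n/r` edges. -/
theorem statement8 {V : Type*} [Fintype V] [DecidableEq V] (r : ℕ) (hr : 2 ≤ r)
    (H : Finset (Finset V)) (huniform : ∀ A ∈ H, A.card = r)
    (hfree : ∀ S : Finset V, S.card = r + 1 → (H.filter (fun A => A ⊆ S)).card ≤ 2) :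
    (H.card : ℚ) ≤ (Fintype.card V : ℚ) / (r : ℚ) ^ 2 * ((Fintype.card V).choose (r - 1) : ℚ) ∧
    ((H.card : ℚ) = (Fintype.card V : ℚ) / (r : ℚ) ^ 2 * ((Fintype.card V).choose (r - 1) : ℚ) ↔
      ∀ B : Finset V, B.card = r - 1 →
        ((H.filter (fun A => B ⊆ A)).card : ℚ) = (Fintype.card V : ℚ) / (r : ℚ)) := by
  classical
  set n := Fintype.card V with hn
  set S := (Finset.univ : Finset V).powersetCard (r-1) with hS
  set C := n.choose (r-1) with hC
  set d : Finset V → ℚ := fun B => ((H.filter (fun A => B ⊆ A)).card : ℚ) with hd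
  have hrQ : (0:ℚ) < (r:ℚ) := by exact_mod_cast (by omega : 0 < r)
  have hScardQ : ((S.card : ℕ) : ℚ) = (C : ℚ) := by
    rw [hS, Finset.card_powersetCard, Finset.card_univ, ← hn, ← hC]
  have hS1 : ∑ B ∈ S, d B = (r : ℚ) * H.card := by
    have := deg_sum r hr H huniform
    simp only [hd, hS]
    exact_mod_cast this
  have hS2 : ∑ B ∈ S, (d B)^2 ≤ (n : ℚ) * H.card := by
    have := sq_deg_sum r hr H huniform hfree
    simp only [hd, hS, hn]
    exact_mod_cast this
  have hCS : ((r : ℚ) * H.card)^2 ≤ (C : ℚ) * ∑ B ∈ S, (d B)^2 := by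
    have := sq_sum_le_card_mul_sum_sq (s := S) (f := d)
    rw [hS1, hScardQ] at this
    exact this
  have hkey : ((r : ℚ) * H.card)^2 ≤ (C : ℚ) * ((n : ℚ) * H.card) :=
    le_trans hCS (mul_le_mul_of_nonneg_left hS2 (by positivity))
  have hineq : (H.card : ℚ) ≤ (n : ℚ) / (r : ℚ) ^ 2 * (C : ℚ) := by
    rw [div_mul_eq_mul_div, le_div_iff₀ (by positivity : (0:ℚ) < (r:ℚ)^2)]
    rcases Nat.eq_zero_or_pos H.card with h0 | hpos
    · rw [h0]; push_cast; rw [zero_mul]; positivity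
    · have hHpos : (0:ℚ) < (H.card : ℚ) := by exact_mod_cast hpos
      nlinarith [hkey]
  refine ⟨hineq, ?_, ?_⟩
  · -- equality → all degrees equal n/r
    intro heq B hB
    have hBS : B ∈ S := Finset.mem_powersetCard.mpr ⟨Finset.subset_univ B, hB⟩
    have hdev : ∑ B ∈ S, (d B - (n:ℚ)/(r:ℚ))^2 ≤ 0 := by
      rw [sum_sq_dev, hScardQ, hS1]
      have h2 : 2*((n:ℚ)/(r:ℚ))*((r:ℚ)*(H.card:ℚ)) = 2*(n:ℚ)*(H.card:ℚ) := by
        field_simp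
      have h4 : (n:ℚ)*(H.card:ℚ) = (n:ℚ)^2*(C:ℚ)/(r:ℚ)^2 := by
        rw [heq]; ring
      have h3 : (C:ℚ)*((n:ℚ)/(r:ℚ))^2 = (n:ℚ)^2*(C:ℚ)/(r:ℚ)^2 := by ring
      rw [h2, h3]
      linarith [hS2, h4]
    have h0 : ∑ B ∈ S, (d B - (n:ℚ)/(r:ℚ))^2 = 0 :=
      le_antisymm hdev (Finset.sum_nonneg fun i _ => sq_nonneg _)
    have hall := (Finset.sum_eq_zero_iff_of_nonneg (fun i _ => sq_nonneg _)).mp h0 B hBS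
    have : d B - (n:ℚ)/(r:ℚ) = 0 := by
      exact pow_eq_zero_iff (by norm_num) |>.mp hall
    have hfin : d B = (n:ℚ)/(r:ℚ) := by linarith
    exact hfin
  · -- all degrees n/r → equality
    intro hdeg
    have hsum' : ∑ B ∈ S, d B = (C : ℚ) * ((n:ℚ)/(r:ℚ)) := by
      rw [Finset.sum_congr rfl (fun B hB => hdeg B (Finset.mem_powersetCard.mp hB).2),
        Finset.sum_const, nsmul_eq_mul, hScardQ]
    rw [hS1] at hsum'
    have hr0 : (r:ℚ) ≠ 0 := ne_of_gt hrQ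
    field_simp at hsum' ⊢
    linear_combination hsum'
end

section
/- For every r ≥ 2, the Turán density of the r-triangle satisfies 1/2^{r−1} ≤ π(H(r)) ≤ 1/r. -/
/-- An `r`-uniform hypergraph containing no copy of the `r`-triangle `H(r)` (the unique
`r`-graph on `r+1` vertices with 3 edges): no set of `r+1` vertices spans 3 or more
edges. -/
def TriangleFree (r : ℕ) {V : Type*} [DecidableEq V] (H : Finset (Finset V)) : Prop :=
  (∀ A ∈ H, A.card = r) ∧
  ∀ S : Finset V, S.card = r + 1 → (H.filter (fun A => A ⊆ S)).card ≤ 2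

/-- `ex(H(r), n)`: the maximum number of edges of an `H(r)`-free `r`-graph on `n`
vertices. -/
noncomputable def exTri (r n : ℕ) : ℕ :=
  sSup {m | ∃ H : Finset (Finset (Fin n)), TriangleFree r H ∧ H.card = m}

open Finset

namespace Stmt9

variable {r : ℕ}

lemma tf_card_le {n : ℕ} {H : Finset (Finset (Fin n))} (h : TriangleFree r H) :
    H.card ≤ n.choose r := by
  have hs : H ⊆ (univ : Finset (Fin n)).powersetCard r := by
    intro A hA
    simp [Finset.mem_powersetCard, h.1 A hA, Finset.subset_univ]
  simpa [Finset.card_powersetCard] using Finset.card_le_card hs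

lemma tf_empty (r n : ℕ) : TriangleFree r (∅ : Finset (Finset (Fin n))) := by
  constructor
  · intro A hA; simp at hA
  · intro S _; simp

lemma exTri_spec (r n : ℕ) :
    ∃ H : Finset (Finset (Fin n)), TriangleFree r H ∧ H.card = exTri r n := by
  have h1 : ({m | ∃ H : Finset (Finset (Fin n)), TriangleFree r H ∧ H.card = m}).Nonempty :=
    ⟨0, ∅, tf_empty r n, rfl⟩
  have h2 : BddAbove {m | ∃ H : Finset (Finset (Fin n)), TriangleFree r H ∧ H.card = m} := by
    refine ⟨n.choose r, ?_⟩
    rintro m ⟨H, hH, rfl⟩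
    exact tf_card_le hH
  exact Nat.sSup_mem h1 h2

lemma le_exTri {n : ℕ} {H : Finset (Finset (Fin n))} (h : TriangleFree r H) :
    H.card ≤ exTri r n := by
  have h2 : BddAbove {m | ∃ H : Finset (Finset (Fin n)), TriangleFree r H ∧ H.card = m} := by
    refine ⟨n.choose r, ?_⟩
    rintro m ⟨H, hH, rfl⟩
    exact tf_card_le hH
  exact le_csSup h2 ⟨H, h, rfl⟩

lemma tf_subset {n : ℕ} {H H' : Finset (Finset (Fin n))} (hs : H' ⊆ H)
    (h : TriangleFree r H) : TriangleFree r H' := by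
  refine ⟨fun A hA => h.1 A (hs hA), fun S hS => ?_⟩
  exact le_trans (Finset.card_le_card (Finset.filter_subset_filter _ hs)) (h.2 S hS)


lemma preim_image {n m : ℕ} (f : Fin n ↪ Fin m) (A : Finset (Fin m))
    (hA : ∀ x ∈ A, x ∈ Set.range f) :
    (A.preimage f f.injective.injOn).image f = A := by
  classical
  rw [Finset.image_preimage]
  exact Finset.filter_true_of_mem hA

lemma card_preim {n m : ℕ} (f : Fin n ↪ Fin m) (A : Finset (Fin m))
    (hA : ∀ x ∈ A, x ∈ Set.range f) :
    (A.preimage f f.injective.injOn).card = A.card :=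
  calc (A.preimage f f.injective.injOn).card
      = ((A.preimage f f.injective.injOn).image f).card :=
        (Finset.card_image_of_injective _ f.injective).symm
    _ = A.card := by rw [preim_image f A hA]

lemma tf_transfer {n m : ℕ} (f : Fin n ↪ Fin m) {H : Finset (Finset (Fin m))}
    (h : TriangleFree r H) (hran : ∀ A ∈ H, ∀ x ∈ A, x ∈ Set.range f) :
    ∃ G : Finset (Finset (Fin n)), TriangleFree r G ∧ G.card = H.card := by
  classical
  refine ⟨H.image (fun A => A.preimage f f.injective.injOn), ⟨?_, ?_⟩, ?_⟩
  · rintro B hB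
    rw [Finset.mem_image] at hB
    obtain ⟨A, hA, rfl⟩ := hB
    rw [card_preim f A (hran A hA)]
    exact h.1 A hA
  · intro S hS
    have hSc : (S.image f).card = r + 1 := by
      rw [Finset.card_image_of_injective _ f.injective, hS]
    refine le_trans ?_ (h.2 (S.image f) hSc)
    apply Finset.card_le_card_of_injOn (fun B => B.image f)
    · intro B hB
      rw [Finset.mem_coe, Finset.mem_filter] at hB ⊢
      beta_reduce
      obtain ⟨hB1, hB2⟩ := hB
      rw [Finset.mem_image] at hB1
      obtain ⟨A, hA, rfl⟩ := hB1
      rw [preim_image f A (hran A hA)]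
      refine ⟨hA, ?_⟩
      rw [← preim_image f A (hran A hA)]
      exact Finset.image_subset_image hB2
    · intro B1 _ B2 _ he
      exact Finset.image_injective f.injective he
  · apply Finset.card_image_of_injOn
    intro A1 h1 A2 h2 he
    have : (A1.preimage f f.injective.injOn).image f
        = (A2.preimage f f.injective.injOn).image f := congrArg _ he
    rwa [preim_image f A1 (hran A1 h1), preim_image f A2 (hran A2 h2)] at this

lemma exTri_rec {n : ℕ} (hr1 : 1 ≤ r) :
    (n + 1 - r) * exTri r (n + 1) ≤ (n + 1) * exTri r n := by
  classical
  obtain ⟨H, hH, hcard⟩ := exTri_spec r (n + 1)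
  have key : ∑ v : Fin (n + 1), (H.filter (fun A => v ∉ A)).card = (n + 1 - r) * H.card := by
    have h1 : ∀ v : Fin (n + 1), (H.filter (fun A => v ∉ A)).card
        = ∑ A ∈ H, (if v ∉ A then 1 else 0) := by
      intro v; rw [Finset.card_filter]
    simp_rw [h1]
    rw [Finset.sum_comm]
    have h2 : ∀ A ∈ H, (∑ v : Fin (n+1), if v ∉ A then 1 else 0) = n + 1 - r := by
      intro A hA
      rw [← Finset.card_filter]
      have h3 : Finset.filter (fun v => v ∉ A) Finset.univ = Finset.univ \ A := by
        ext x; simp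
      rw [h3, Finset.card_sdiff_of_subset (Finset.subset_univ A), hH.1 A hA, Finset.card_univ,
        Fintype.card_fin]
    rw [Finset.sum_congr rfl h2, Finset.sum_const, smul_eq_mul, hcard, Nat.mul_comm]
  have bound : ∀ v : Fin (n + 1), (H.filter (fun A => v ∉ A)).card ≤ exTri r n := by
    intro v
    have htf : TriangleFree r (H.filter (fun A => v ∉ A)) :=
      tf_subset (Finset.filter_subset _ _) hH
    have hemb : ∀ A ∈ H.filter (fun A => v ∉ A), ∀ x ∈ A,
        x ∈ Set.range ((v.succAboveOrderEmb).toEmbedding : Fin n ↪ Fin (n+1)) := by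
      intro A hA x hx
      rw [Finset.mem_filter] at hA
      have hxv : x ≠ v := by rintro rfl; exact hA.2 hx
      have : Set.range ((v.succAboveOrderEmb).toEmbedding : Fin n ↪ Fin (n+1))
          = Set.range v.succAbove := rfl
      rw [this, Fin.range_succAbove]
      simpa using hxv
    obtain ⟨G, hG, hGc⟩ := tf_transfer (v.succAboveOrderEmb).toEmbedding htf hemb
    rw [← hGc]; exact le_exTri hG
  calc (n + 1 - r) * exTri r (n + 1) = (n + 1 - r) * H.card := by rw [hcard]
    _ = ∑ v : Fin (n + 1), (H.filter (fun A => v ∉ A)).card := key.symm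
    _ ≤ ∑ _v : Fin (n + 1), exTri r n := Finset.sum_le_sum (fun v _ => bound v)
    _ = (n + 1) * exTri r n := by rw [Finset.sum_const, Finset.card_univ, Fintype.card_fin,
        smul_eq_mul]

lemma exTri_rec' {n : ℕ} (hr1 : 1 ≤ r) :
    exTri r (n + 1) * n.choose r ≤ exTri r n * (n + 1).choose r := by
  have h1 := exTri_rec (n := n) (r := r) hr1
  have h2 : n.choose r * (n + 1) = (n + 1).choose r * (n + 1 - r) := Nat.choose_mul_succ_eq n r
  have : exTri r (n + 1) * (n.choose r * (n + 1)) ≤ exTri r n * (n + 1).choose r * (n + 1) := by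
    rw [h2]
    calc exTri r (n + 1) * ((n + 1).choose r * (n + 1 - r))
        = ((n + 1 - r) * exTri r (n + 1)) * (n + 1).choose r := by ring
      _ ≤ ((n + 1) * exTri r n) * (n + 1).choose r := Nat.mul_le_mul_right _ h1
      _ = exTri r n * (n + 1).choose r * (n + 1) := by ring
  have hpos : 0 < n + 1 := Nat.succ_pos n
  exact Nat.le_of_mul_le_mul_right (by linarith [this]) hpos

-- ===== upper bound: generalized Mantel =====

lemma upper_S2 {n : ℕ} (hr1 : 1 ≤ r) {H : Finset (Finset (Fin n))} (hH : TriangleFree r H)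
    {A : Finset (Fin n)} (hA : A ∈ H) :
    ∑ F ∈ Finset.powersetCard (r - 1) A, (H.filter (fun B => F ⊆ B)).card ≤ n := by
  classical
  -- the sum is the cardinality of a sigma set
  rw [← Finset.card_sigma]
  have := Finset.card_le_card_of_injOn
    (f := fun p : (Σ _F : Finset (Fin n), Finset (Fin n)) => p.2 \ p.1)
    (s := (Finset.powersetCard (r - 1) A).sigma (fun F => H.filter (fun B => F ⊆ B)))
    (t := (Finset.univ : Finset (Fin n)).image (fun v => ({v} : Finset (Fin n))))
    ?_ ?_
  · calc _ ≤ ((Finset.univ : Finset (Fin n)).image (fun v => ({v} : Finset (Fin n)))).card :=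
        this
      _ ≤ (Finset.univ : Finset (Fin n)).card := Finset.card_image_le
      _ = n := by simp
  · -- maps into singletons
    rintro ⟨F, B⟩ hp
    rw [Finset.mem_coe, Finset.mem_sigma, Finset.mem_powersetCard, Finset.mem_filter] at hp
    obtain ⟨⟨hFA, hFc⟩, hBH, hFB⟩ := hp
    have hcard : (B \ F).card = 1 := by
      rw [Finset.card_sdiff_of_subset hFB, hH.1 B hBH, hFc]
      omega
    obtain ⟨v, hv⟩ := Finset.card_eq_one.1 hcard
    rw [Finset.mem_coe, Finset.mem_image]
    exact ⟨v, Finset.mem_univ v, hv.symm⟩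
  · -- injectivity
    rintro ⟨F, B⟩ hp ⟨F', B'⟩ hp' he
    simp only [Finset.mem_coe, Finset.mem_sigma, Finset.mem_powersetCard,
      Finset.mem_filter] at hp hp'
    obtain ⟨⟨hFA, hFc⟩, hBH, hFB⟩ := hp
    obtain ⟨⟨hFA', hFc'⟩, hBH', hFB'⟩ := hp'
    simp only at he
    have hcard : (B \ F).card = 1 := by
      rw [Finset.card_sdiff_of_subset hFB, hH.1 B hBH, hFc]; omega
    obtain ⟨v, hv⟩ := Finset.card_eq_one.1 hcard
    have hBF : B = F ∪ {v} := by
      rw [← hv, Finset.union_comm]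
      exact (Finset.sdiff_union_of_subset hFB).symm
    have hv' : B' \ F' = {v} := by rw [← he, hv]
    have hBF' : B' = F' ∪ {v} := by
      rw [← hv', Finset.union_comm]
      exact (Finset.sdiff_union_of_subset hFB').symm
    have hBB' : B = B' := by
      by_cases hvA : v ∈ A
      · -- both equal A
        have h1 : B ⊆ A := by
          rw [hBF]; exact Finset.union_subset hFA (Finset.singleton_subset_iff.2 hvA)
        have h2 : B' ⊆ A := by
          rw [hBF']; exact Finset.union_subset hFA' (Finset.singleton_subset_iff.2 hvA)
        have e1 : B = A := Finset.eq_of_subset_of_card_le h1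
          (by rw [hH.1 B hBH, hH.1 A hA])
        have e2 : B' = A := Finset.eq_of_subset_of_card_le h2
          (by rw [hH.1 B' hBH', hH.1 A hA])
        rw [e1, e2]
      · -- v outside A : use triangle-freeness on A ∪ {v}
        by_contra hne
        set S := A ∪ {v} with hS
        have hScard : S.card = r + 1 := by
          rw [hS, Finset.union_comm, ← Finset.insert_eq,
            Finset.card_insert_of_notMem hvA, hH.1 A hA]
        have hmem : ∀ C ∈ ({A, B, B'} : Finset (Finset (Fin n))),
            C ∈ H.filter (fun C => C ⊆ S) := by
          intro C hC
          simp only [Finset.mem_insert, Finset.mem_singleton] at hC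
          rw [Finset.mem_filter]
          rcases hC with rfl | rfl | rfl
          · exact ⟨hA, Finset.subset_union_left⟩
          · refine ⟨hBH, ?_⟩
            rw [hBF]
            exact Finset.union_subset (hFA.trans Finset.subset_union_left)
              Finset.subset_union_right
          · refine ⟨hBH', ?_⟩
            rw [hBF']
            exact Finset.union_subset (hFA'.trans Finset.subset_union_left)
              Finset.subset_union_right
        have hvB : v ∈ B := by rw [hBF]; simp
        have hAB : A ≠ B := by rintro rfl; exact hvA hvB
        have hvB' : v ∈ B' := by rw [hBF']; simp
        have hAB' : A ≠ B' := by rintro rfl; exact hvA hvB'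
        have h3 : ({A, B, B'} : Finset (Finset (Fin n))).card = 3 := by
          rw [Finset.card_insert_of_notMem (by simp [hAB, hAB']),
            Finset.card_insert_of_notMem (by simp [hne]), Finset.card_singleton]
        have := Finset.card_le_card (fun C hC => hmem C hC)
        rw [h3] at this
        have h4 := hH.2 S hScard
        omega
    have hFF' : F = F' := by
      have : B \ {v} = F := by
        rw [hBF]
        rw [Finset.union_sdiff_right]
        apply Finset.sdiff_eq_self_of_disjoint
        rw [Finset.disjoint_singleton_right]
        intro hvF
        have : v ∈ B \ F := by rw [hv]; exact Finset.mem_singleton_self v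
        exact (Finset.mem_sdiff.mp this).2 hvF
      have h2 : B' \ {v} = F' := by
        rw [hBF']
        rw [Finset.union_sdiff_right]
        apply Finset.sdiff_eq_self_of_disjoint
        rw [Finset.disjoint_singleton_right]
        intro hvF
        have hx : v ∈ B' \ F' := by rw [hv']; exact Finset.mem_singleton_self v
        exact (Finset.mem_sdiff.1 hx).2 hvF
      rw [← this, ← h2, hBB']
    exact Sigma.ext hFF' (heq_of_eq hBB')

lemma upper_main {n : ℕ} (hr1 : 1 ≤ r) : r ^ 2 * exTri r n ≤ n * n.choose (r - 1) := by
  classical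
  obtain ⟨H, hH, hcard⟩ := exTri_spec r n
  set m := H.card with hm
  set Ω := Finset.powersetCard (r - 1) (Finset.univ : Finset (Fin n)) with hΩ
  set d := fun F : Finset (Fin n) => (H.filter (fun B => F ⊆ B)).card with hd
  have filter_eq : ∀ A ∈ H, Ω.filter (fun F => F ⊆ A) = Finset.powersetCard (r - 1) A := by
    intro A _
    ext F
    simp only [Finset.mem_filter, hΩ, Finset.mem_powersetCard]
    constructor
    · rintro ⟨⟨_, hc⟩, hFA⟩; exact ⟨hFA, hc⟩
    · rintro ⟨hFA, hc⟩; exact ⟨⟨Finset.subset_univ F, hc⟩, hFA⟩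
  have S1 : ∑ F ∈ Ω, d F = r * m := by
    simp only [hd, Finset.card_filter]
    rw [Finset.sum_comm]
    have : ∀ A ∈ H, (∑ F ∈ Ω, if F ⊆ A then 1 else 0) = r := by
      intro A hA
      rw [← Finset.card_filter, filter_eq A hA, Finset.card_powersetCard, hH.1 A hA]
      have h := Nat.choose_symm (n := r) (k := 1) hr1
      rw [h, Nat.choose_one_right]
    rw [Finset.sum_congr rfl this, Finset.sum_const, smul_eq_mul, hm, Nat.mul_comm]
  have S3 : ∑ F ∈ Ω, d F * d F ≤ m * n := by
    have expand : ∑ F ∈ Ω, d F * d F = ∑ A ∈ H, ∑ F ∈ Finset.powersetCard (r-1) A, d F := by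
      calc ∑ F ∈ Ω, d F * d F
          = ∑ F ∈ Ω, ∑ A ∈ H, (if F ⊆ A then d F else 0) := by
            apply Finset.sum_congr rfl
            intro F _
            rw [← Finset.sum_filter, Finset.sum_const, smul_eq_mul]
        _ = ∑ A ∈ H, ∑ F ∈ Ω, (if F ⊆ A then d F else 0) := Finset.sum_comm
        _ = ∑ A ∈ H, ∑ F ∈ Ω.filter (fun F => F ⊆ A), d F := by
            apply Finset.sum_congr rfl; intro A _; rw [Finset.sum_filter]
        _ = ∑ A ∈ H, ∑ F ∈ Finset.powersetCard (r-1) A, d F := by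
            apply Finset.sum_congr rfl; intro A hA; rw [filter_eq A hA]
    rw [expand]
    calc ∑ A ∈ H, ∑ F ∈ Finset.powersetCard (r-1) A, d F ≤ ∑ _A ∈ H, n :=
        Finset.sum_le_sum (fun A hA => upper_S2 hr1 hH hA)
      _ = m * n := by rw [Finset.sum_const, smul_eq_mul]
  -- Cauchy-Schwarz in ℝ
  have CS : ((r * m : ℕ) : ℝ) ^ 2 ≤ ((n.choose (r-1) : ℕ) : ℝ) * ((m * n : ℕ) : ℝ) := by
    have h1 : ((r * m : ℕ) : ℝ) = ∑ F ∈ Ω, (d F : ℝ) := by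
      rw [← S1]; push_cast; rfl
    have h2 := sq_sum_le_card_mul_sum_sq (s := Ω) (f := fun F => (d F : ℝ))
    rw [h1]
    have hΩc : (Ω.card : ℝ) = (n.choose (r-1) : ℝ) := by
      rw [hΩ, Finset.card_powersetCard]; simp
    have h3 : ∑ F ∈ Ω, (d F : ℝ) ^ 2 ≤ ((m * n : ℕ) : ℝ) := by
      have he : ∑ F ∈ Ω, (d F : ℝ) ^ 2 = ((∑ F ∈ Ω, d F * d F : ℕ) : ℝ) := by
        push_cast; simp [sq]
      rw [he]; exact_mod_cast S3
    calc (∑ F ∈ Ω, (d F : ℝ)) ^ 2 ≤ Ω.card * ∑ F ∈ Ω, (d F : ℝ) ^ 2 := h2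
      _ ≤ ((n.choose (r-1) : ℕ) : ℝ) * ((m * n : ℕ) : ℝ) := by
          rw [hΩc]; exact mul_le_mul_of_nonneg_left h3 (by positivity)
  have final : (r * m) ^ 2 ≤ n.choose (r - 1) * (m * n) := by exact_mod_cast CS
  rcases Nat.eq_zero_or_pos m with h0 | hpos
  · rw [← hcard, h0]; simp
  · have hh : r ^ 2 * m * m ≤ n * n.choose (r - 1) * m := by
      calc r ^ 2 * m * m = (r * m) ^ 2 := by ring
        _ ≤ n.choose (r - 1) * (m * n) := final
        _ = n * n.choose (r - 1) * m := by ring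
    have goal' : r ^ 2 * m ≤ n * n.choose (r - 1) := Nat.le_of_mul_le_mul_right hh hpos
    rw [← hcard]; exact goal'

-- ===== lower bound: alternating construction =====

def altFn {n : ℕ} (A : Finset (Fin n)) (x : Fin n) : ZMod 2 :=
  ((x : ℕ) : ZMod 2) + ((A.filter (fun y => y < x)).card : ZMod 2)

def IsAlt {n : ℕ} (A : Finset (Fin n)) : Prop :=
  ∀ x ∈ A, ∀ y ∈ A, altFn A x = altFn A y

instance {n : ℕ} : DecidablePred (IsAlt (n := n)) := fun _A => by
  unfold IsAlt; infer_instance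

def altSet (r n : ℕ) : Finset (Finset (Fin n)) :=
  (Finset.powersetCard r (Finset.univ : Finset (Fin n))).filter IsAlt

lemma altFn_erase {n : ℕ} {S : Finset (Fin n)} {a : Fin n} (ha : a ∈ S) (x : Fin n)
    (hx : x ≠ a) :
    altFn (S.erase a) x = altFn S x + (if a < x then 1 else 0) := by
  unfold altFn
  have hfe : (S.erase a).filter (fun y => y < x) = (S.filter (fun y => y < x)).erase a := by
    ext z
    simp only [Finset.mem_filter, Finset.mem_erase]
    tauto
  rw [hfe]
  by_cases hax : a < x
  · have hmem : a ∈ S.filter (fun y => y < x) := Finset.mem_filter.2 ⟨ha, hax⟩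
    rw [Finset.card_erase_of_mem hmem, if_pos hax]
    have hpos : 1 ≤ (S.filter (fun y => y < x)).card := Finset.card_pos.2 ⟨a, hmem⟩
    rw [Nat.cast_sub hpos, Nat.cast_one, sub_eq_add_neg,
      show (-1 : ZMod 2) = 1 by decide]
    ring
  · have hmem : a ∉ S.filter (fun y => y < x) := by
      rw [Finset.mem_filter]; tauto
    rw [Finset.erase_eq_of_notMem hmem, if_neg hax, add_zero]

lemma alt_core {n : ℕ} {S : Finset (Fin n)} {a b c : Fin n}
    (ha : a ∈ S) (hb : b ∈ S) (hc : c ∈ S) (hab : a < b) (hbc : b < c)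
    (hA : IsAlt (S.erase a)) (hB : IsAlt (S.erase b)) (hC : IsAlt (S.erase c)) : False := by
  have hba : b ≠ a := ne_of_gt hab
  have hca : c ≠ a := ne_of_gt (hab.trans hbc)
  have hcb : c ≠ b := ne_of_gt hbc
  have hac : a ≠ c := hca.symm
  have habn : a ≠ b := hba.symm
  have hbcn : b ≠ c := hcb.symm
  have h1 := hA b (Finset.mem_erase.2 ⟨hba, hb⟩) c (Finset.mem_erase.2 ⟨hca, hc⟩)
  have h2 := hB a (Finset.mem_erase.2 ⟨habn, ha⟩) c (Finset.mem_erase.2 ⟨hcb, hc⟩)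
  have h3 := hC a (Finset.mem_erase.2 ⟨hac, ha⟩) b (Finset.mem_erase.2 ⟨hbcn, hb⟩)
  rw [altFn_erase ha b hba, altFn_erase ha c hca, if_pos hab, if_pos (hab.trans hbc)] at h1
  rw [altFn_erase hb a habn, altFn_erase hb c hcb, if_neg (not_lt.2 hab.le),
    if_pos hbc, add_zero] at h2
  rw [altFn_erase hc a hac, altFn_erase hc b hbcn, if_neg (not_lt.2 (hab.trans hbc).le),
    if_neg (not_lt.2 hbc.le), add_zero, add_zero] at h3
  have e1 : altFn S b = altFn S c := by
    exact add_right_cancel h1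
  rw [h3, e1] at h2
  have : (1 : ZMod 2) = 0 := left_eq_add.mp h2
  exact absurd this (by decide)

lemma alt_core' {n : ℕ} {S : Finset (Fin n)} {a b c : Fin n}
    (ha : a ∈ S) (hb : b ∈ S) (hc : c ∈ S) (h1 : a ≠ b) (h2 : a ≠ c) (h3 : b ≠ c)
    (hA : IsAlt (S.erase a)) (hB : IsAlt (S.erase b)) (hC : IsAlt (S.erase c)) : False := by
  rcases h1.lt_or_gt with x1 | x1
  · rcases h3.lt_or_gt with x2 | x2
    · exact alt_core ha hb hc x1 x2 hA hB hC
    · rcases h2.lt_or_gt with x3 | x3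
      · exact alt_core ha hc hb x3 x2 hA hC hB
      · exact alt_core hc ha hb x3 x1 hC hA hB
  · rcases h2.lt_or_gt with x3 | x3
    · exact alt_core hb ha hc x1 x3 hB hA hC
    · rcases h3.lt_or_gt with x2 | x2
      · exact alt_core hb hc ha x2 x3 hB hC hA
      · exact alt_core hc hb ha x2 x1 hC hB hA

lemma eq_erase_of_subset {n : ℕ} {S A : Finset (Fin n)} {r : ℕ} (hAS : A ⊆ S)
    (hA : A.card = r) (hS : S.card = r + 1) : ∃ a ∈ S, A = S.erase a := by
  have hcard : (S \ A).card = 1 := by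
    rw [Finset.card_sdiff_of_subset hAS, hA, hS]; omega
  obtain ⟨v, hv⟩ := Finset.card_eq_one.1 hcard
  have hvS : v ∈ S := by
    have : v ∈ S \ A := by rw [hv]; exact Finset.mem_singleton_self v
    exact (Finset.mem_sdiff.1 this).1
  refine ⟨v, hvS, ?_⟩
  have : S.erase v = S \ {v} := by rw [Finset.sdiff_singleton_eq_erase]
  rw [this, ← hv, Finset.sdiff_sdiff_self_left]
  exact (Finset.inter_eq_right.2 hAS).symm

lemma altSet_tf (r n : ℕ) : TriangleFree r (altSet r n) := by
  constructor
  · intro A hA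
    rw [altSet, Finset.mem_filter, Finset.mem_powersetCard] at hA
    exact hA.1.2
  · intro S hS
    by_contra hgt
    push_neg at hgt
    rw [show (2 : ℕ) < _ ↔ _ from Finset.two_lt_card_iff] at hgt
    obtain ⟨A, B, C, hA, hB, hC, hAB, hAC, hBC⟩ := hgt
    rw [Finset.mem_filter] at hA hB hC
    obtain ⟨hA1, hA2⟩ := hA
    obtain ⟨hB1, hB2⟩ := hB
    obtain ⟨hC1, hC2⟩ := hC
    rw [altSet, Finset.mem_filter, Finset.mem_powersetCard] at hA1 hB1 hC1
    obtain ⟨a, haS, rfl⟩ := eq_erase_of_subset hA2 hA1.1.2 hS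
    obtain ⟨b, hbS, rfl⟩ := eq_erase_of_subset hB2 hB1.1.2 hS
    obtain ⟨c, hcS, rfl⟩ := eq_erase_of_subset hC2 hC1.1.2 hS
    have hab : a ≠ b := by rintro rfl; exact hAB rfl
    have hac : a ≠ c := by rintro rfl; exact hAC rfl
    have hbc : b ≠ c := by rintro rfl; exact hBC rfl
    exact alt_core' haS hbS hcS hab hac hbc hA1.2 hB1.2 hC1.2

lemma card_val_lt (n t : ℕ) (h : t ≤ n) :
    ((Finset.univ : Finset (Fin n)).filter (fun x : Fin n => (x : ℕ) < t)).card = t := by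
  classical
  have key : ((Finset.univ : Finset (Fin n)).filter (fun x : Fin n => (x : ℕ) < t)).card
      = (Finset.range t).card := by
    apply Finset.card_bij (fun (x : Fin n) _ => (x : ℕ))
    · intro x hx
      rw [Finset.mem_filter] at hx
      exact Finset.mem_range.2 hx.2
    · intro x hx y hy hxy
      exact Fin.val_injective hxy
    · intro m hm
      rw [Finset.mem_range] at hm
      exact ⟨⟨m, lt_of_lt_of_le hm h⟩, Finset.mem_filter.2 ⟨Finset.mem_univ _, hm⟩, rfl⟩
  rw [key, Finset.card_range]

lemma rank_le_val {n : ℕ} (C : Finset (Fin n)) (x : Fin n) :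
    (C.filter (fun y => y < x)).card ≤ (x : ℕ) := by
  calc (C.filter (fun y => y < x)).card
      ≤ ((Finset.univ : Finset (Fin n)).filter (fun y : Fin n => (y : ℕ) < (x : ℕ))).card := by
        apply Finset.card_le_card
        intro z hz
        rw [Finset.mem_filter] at hz ⊢
        exact ⟨Finset.mem_univ _, hz.2⟩
    _ = (x : ℕ) := card_val_lt n x x.isLt.le

lemma altSet_card {r : ℕ} (n : ℕ) (hr : 2 ≤ r) (hn : 2 * r + 4 ≤ n) :
    2 * ((n / 2).choose r) ≤ (altSet r n).card := by
  classical
  have npos : 0 < n := by omega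
  set t := n / 2 with ht
  have htn : t ≤ n := Nat.div_le_self n 2
  have h2t : 2 * t ≤ n := by omega
  set dom := Finset.powersetCard r
    ((Finset.univ : Finset (Fin n)).filter (fun x : Fin n => (x : ℕ) < t)) with hdom
  set f : ℕ → Finset (Fin n) → Fin n → Fin n :=
    fun δ C x => ⟨(2 * (x : ℕ) + δ - (C.filter (fun y => y < x)).card) % n,
      Nat.mod_lt _ npos⟩ with hf
  have hdomP : ∀ C ∈ dom, (∀ x ∈ C, (x : ℕ) < t) ∧ C.card = r := by
    intro C hC
    rw [hdom, Finset.mem_powersetCard] at hC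
    refine ⟨fun x hx => ?_, hC.2⟩
    have := hC.1 hx
    rw [Finset.mem_filter] at this
    exact this.2
  -- value of f
  have hval : ∀ δ, δ ≤ 1 → ∀ C ∈ dom, ∀ x ∈ C,
      ((f δ C x) : ℕ) = 2 * (x : ℕ) + δ - (C.filter (fun y => y < x)).card := by
    intro δ hδ C hC x hx
    have h1 := (hdomP C hC).1 x hx
    have h2 := rank_le_val C x
    have hlt : 2 * (x : ℕ) + δ - (C.filter (fun y => y < x)).card < n := by omega
    simp only [hf]
    exact Nat.mod_eq_of_lt hlt
  -- strict monotonicity on C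
  have hrank2 : ∀ (C : Finset (Fin n)) (x y : Fin n), x < y →
      (C.filter (fun z => z < y)).card
        ≤ (C.filter (fun z => z < x)).card + ((y : ℕ) - (x : ℕ)) := by
    intro C x y hxy
    have hsub : C.filter (fun z => z < x) ⊆ C.filter (fun z => z < y) := by
      intro z hz
      rw [Finset.mem_filter] at hz ⊢
      exact ⟨hz.1, hz.2.trans hxy⟩
    have hsub2 : (C.filter (fun z => z < y)) \ (C.filter (fun z => z < x))
        ⊆ Finset.univ.filter (fun z : Fin n => (x : ℕ) ≤ (z : ℕ) ∧ (z : ℕ) < (y : ℕ)) := by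
      intro z hz
      rw [Finset.mem_sdiff, Finset.mem_filter, Finset.mem_filter] at hz
      rw [Finset.mem_filter]
      obtain ⟨⟨h1, h2⟩, h3⟩ := hz
      have : ¬ z < x := fun hlt => h3 ⟨h1, hlt⟩
      exact ⟨Finset.mem_univ _, not_lt.1 this, h2⟩
    have hsub3 : (Finset.univ.filter (fun z : Fin n => (z : ℕ) < (x : ℕ)))
        ⊆ (Finset.univ.filter (fun z : Fin n => (z : ℕ) < (y : ℕ))) := by
      intro z hz
      rw [Finset.mem_filter] at hz ⊢
      exact ⟨Finset.mem_univ _, hz.2.trans hxy⟩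
    have hmid : (Finset.univ.filter
        (fun z : Fin n => (x : ℕ) ≤ (z : ℕ) ∧ (z : ℕ) < (y : ℕ))).card
        = (y : ℕ) - (x : ℕ) := by
      have he : Finset.univ.filter (fun z : Fin n => (x : ℕ) ≤ (z : ℕ) ∧ (z : ℕ) < (y : ℕ))
          = (Finset.univ.filter (fun z : Fin n => (z : ℕ) < (y : ℕ)))
            \ (Finset.univ.filter (fun z : Fin n => (z : ℕ) < (x : ℕ))) := by
        ext z
        rw [Finset.mem_sdiff, Finset.mem_filter, Finset.mem_filter, Finset.mem_filter]
        constructor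
        · rintro ⟨hu, h1, h2⟩
          exact ⟨⟨hu, h2⟩, fun hc => absurd hc.2 (not_lt.2 h1)⟩
        · rintro ⟨⟨hu, h2⟩, hc⟩
          refine ⟨hu, not_lt.1 (fun hlt => hc ⟨hu, hlt⟩), h2⟩
      rw [he, Finset.card_sdiff_of_subset hsub3, card_val_lt n y y.isLt.le, card_val_lt n x x.isLt.le]
    have hkey := Finset.card_sdiff_add_card_eq_card hsub
    have hb := Finset.card_le_card hsub2
    rw [hmid] at hb
    omega
  have hmono : ∀ δ, δ ≤ 1 → ∀ C ∈ dom, ∀ x ∈ C, ∀ y ∈ C, x < y → f δ C x < f δ C y := by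
    intro δ hδ C hC x hx y hy hxy
    have e1 := hval δ hδ C hC x hx
    have e2 := hval δ hδ C hC y hy
    have h1 := rank_le_val C x
    have h2 := hrank2 C x y hxy
    have hvxy : (x : ℕ) < (y : ℕ) := hxy
    rw [Fin.lt_def, e1, e2]
    omega
  -- injectivity of f δ C on C, and rank preservation
  have hinjOn : ∀ δ, δ ≤ 1 → ∀ C ∈ dom, Set.InjOn (f δ C) C := by
    intro δ hδ C hC x hx y hy hxy
    by_contra hne
    rcases lt_or_gt_of_ne hne with h | h
    · exact absurd hxy (ne_of_lt (hmono δ hδ C hC x hx y hy h))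
    · exact absurd hxy.symm (ne_of_lt (hmono δ hδ C hC y hy x hx h))
  have hrank_im : ∀ δ, δ ≤ 1 → ∀ C ∈ dom, ∀ x ∈ C,
      ((C.image (f δ C)).filter (fun z => z < f δ C x)).card
        = (C.filter (fun y => y < x)).card := by
    intro δ hδ C hC x hx
    have him : (C.image (f δ C)).filter (fun z => z < f δ C x)
        = (C.filter (fun y => y < x)).image (f δ C) := by
      ext z
      simp only [Finset.mem_filter, Finset.mem_image]
      constructor
      · rintro ⟨⟨w, hw, rfl⟩, hlt⟩
        refine ⟨w, ⟨hw, ?_⟩, rfl⟩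
        by_contra hnlt
        rcases eq_or_lt_of_le (not_lt.1 hnlt) with h | h
        · exact absurd hlt (by rw [← h]; exact lt_irrefl _)
        · exact absurd (hmono δ hδ C hC x hx w hw h) (not_lt.2 hlt.le)
      · rintro ⟨w, ⟨hw1, hw2⟩, rfl⟩
        exact ⟨⟨w, hw1, rfl⟩, hmono δ hδ C hC w hw1 x hx hw2⟩
    rw [him]
    exact Finset.card_image_of_injOn ((hinjOn δ hδ C hC).mono (by
      intro z hz; exact (Finset.mem_filter.1 hz).1))
  -- the ℕ-invariant
  have hinv : ∀ δ, δ ≤ 1 → ∀ C ∈ dom, ∀ x ∈ C,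
      ((f δ C x) : ℕ) + ((C.image (f δ C)).filter (fun z => z < f δ C x)).card
        = 2 * (x : ℕ) + δ := by
    intro δ hδ C hC x hx
    rw [hval δ hδ C hC x hx, hrank_im δ hδ C hC x hx]
    have := rank_le_val C x
    omega
  -- altness of images
  have halt : ∀ δ, δ ≤ 1 → ∀ C ∈ dom, IsAlt (C.image (f δ C)) := by
    intro δ hδ C hC z hz w hw
    rw [Finset.mem_image] at hz hw
    obtain ⟨x, hx, rfl⟩ := hz
    obtain ⟨y, hy, rfl⟩ := hw
    have e1 : altFn (C.image (f δ C)) (f δ C x) = ((δ : ℕ) : ZMod 2) := by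
      unfold altFn
      rw [← Nat.cast_add, hinv δ hδ C hC x hx]
      push_cast
      rw [show ((2 : ZMod 2)) = 0 by decide]
      ring
    have e2 : altFn (C.image (f δ C)) (f δ C y) = ((δ : ℕ) : ZMod 2) := by
      unfold altFn
      rw [← Nat.cast_add, hinv δ hδ C hC y hy]
      push_cast
      rw [show ((2 : ZMod 2)) = 0 by decide]
      ring
    rw [e1, e2]
  -- membership in altSet
  have hmem : ∀ δ, δ ≤ 1 → ∀ C ∈ dom, C.image (f δ C) ∈ altSet r n := by
    intro δ hδ C hC
    rw [altSet, Finset.mem_filter, Finset.mem_powersetCard]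
    exact ⟨⟨Finset.subset_univ _, by
      rw [Finset.card_image_of_injOn (hinjOn δ hδ C hC), (hdomP C hC).2]⟩, halt δ hδ C hC⟩
  -- reconstruction: C is determined by its image
  have hrecon : ∀ δ, δ ≤ 1 → ∀ C ∈ dom,
      (C.image (f δ C)).image
        (fun z : Fin n =>
          (⟨((z : ℕ) + ((C.image (f δ C)).filter (fun w => w < z)).card - δ) / 2 % n,
          Nat.mod_lt _ npos⟩ : Fin n)) = C := by
    intro δ hδ C hC
    rw [Finset.image_image]
    have heq : ∀ x ∈ C, (Function.comp
        (fun z : Fin n =>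
          (⟨((z : ℕ) + ((C.image (f δ C)).filter (fun w => w < z)).card - δ) / 2 % n,
            Nat.mod_lt _ npos⟩ : Fin n)) (f δ C)) x = x := by
      intro x hx
      apply Fin.ext
      simp only [Function.comp_apply]
      rw [hinv δ hδ C hC x hx]
      have : 2 * (x : ℕ) + δ - δ = 2 * (x : ℕ) := by omega
      rw [this, Nat.mul_div_cancel_left _ (by norm_num : 0 < 2)]
      exact Nat.mod_eq_of_lt x.isLt
    calc C.image _ = C.image id := Finset.image_congr heq
      _ = C := Finset.image_id
  -- injectivity of the construction
  have hphi_inj : ∀ δ, δ ≤ 1 → Set.InjOn (fun C : Finset (Fin n) => C.image (f δ C)) ↑dom := by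
    intro δ hδ C hC C' hC' he
    have h1 := hrecon δ hδ C hC
    have h2 := hrecon δ hδ C' hC'
    simp only at he
    rw [← h1, ← h2, he]
  -- disjointness of the two parities
  have hdisjp : ∀ C ∈ dom, ∀ C' ∈ dom, C.image (f 0 C) ≠ C'.image (f 1 C') := by
    intro C hC C' hC' he
    have hCcard := (hdomP C hC).2
    have hne : C.Nonempty := Finset.card_pos.1 (by rw [hCcard]; omega)
    obtain ⟨x, hx⟩ := hne
    have hz : f 0 C x ∈ C.image (f 0 C) := Finset.mem_image_of_mem _ hx
    have hz' : f 0 C x ∈ C'.image (f 1 C') := by rw [← he]; exact hz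
    obtain ⟨x', hx', hfe⟩ := Finset.mem_image.1 hz'
    have i1 := hinv 0 (by norm_num) C hC x hx
    have i2 := hinv 1 (le_refl 1) C' hC' x' hx'
    rw [hfe, ← he] at i2
    omega
  have hcard_dom : dom.card = t.choose r := by
    rw [hdom, Finset.card_powersetCard, card_val_lt n t htn]
  set im0 := dom.image (fun C => C.image (f 0 C)) with him0d
  set im1 := dom.image (fun C => C.image (f 1 C)) with him1d
  have him0 : im0.card = t.choose r := by
    rw [him0d, Finset.card_image_of_injOn (hphi_inj 0 (by norm_num)), hcard_dom]
  have him1 : im1.card = t.choose r := by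
    rw [him1d, Finset.card_image_of_injOn (hphi_inj 1 (le_refl 1)), hcard_dom]
  have hsub0 : im0 ⊆ altSet r n := by
    intro A hA
    obtain ⟨C, hC, rfl⟩ := Finset.mem_image.1 hA
    exact hmem 0 (by norm_num) C hC
  have hsub1 : im1 ⊆ altSet r n := by
    intro A hA
    obtain ⟨C, hC, rfl⟩ := Finset.mem_image.1 hA
    exact hmem 1 (le_refl 1) C hC
  have hdisj01 : Disjoint im0 im1 := by
    rw [Finset.disjoint_left]
    intro A hA0 hA1
    obtain ⟨C, hC, rfl⟩ := Finset.mem_image.1 hA0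
    obtain ⟨C', hC', he⟩ := Finset.mem_image.1 hA1
    exact hdisjp C hC C' hC' he.symm
  calc 2 * t.choose r = im0.card + im1.card := by rw [him0, him1]; ring
    _ = (im0 ∪ im1).card := (Finset.card_union_of_disjoint hdisj01).symm
    _ ≤ (altSet r n).card := Finset.card_le_card (Finset.union_subset hsub0 hsub1)

-- ===== analysis =====

open Filter Topology

lemma tendsto_ratio (c d : ℝ) :
    Tendsto (fun n : ℕ => ((n : ℝ) + c) / ((n : ℝ) + d)) atTop (𝓝 1) := by
  have h1 : Tendsto (fun n : ℕ => (n : ℝ) + d) atTop atTop :=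
    tendsto_atTop_add_const_right _ d tendsto_natCast_atTop_atTop
  have h2 : Tendsto (fun n : ℕ => ((n : ℝ) + d)⁻¹) atTop (𝓝 0) := h1.inv_tendsto_atTop
  have h3 : Tendsto (fun n : ℕ => 1 + (c - d) * ((n : ℝ) + d)⁻¹) atTop (𝓝 (1 + (c - d) * 0)) :=
    tendsto_const_nhds.add (tendsto_const_nhds.mul h2)
  rw [mul_zero, add_zero] at h3
  apply h3.congr'
  have h4 : ∀ᶠ n : ℕ in atTop, ((n : ℝ) + d) ≠ 0 := by
    have h5 : ∀ᶠ n : ℕ in atTop, (⌈(-d)⌉₊ + 1 : ℕ) ≤ n := eventually_atTop.2 ⟨_, fun n h => h⟩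
    filter_upwards [h5] with n hn
    have : ((-d : ℝ)) ≤ (⌈(-d)⌉₊ : ℝ) := Nat.le_ceil _
    have h6 : ((⌈(-d)⌉₊ + 1 : ℕ) : ℝ) ≤ (n : ℝ) := by exact_mod_cast Nat.cast_le.2 hn
    push_cast at h6
    nlinarith
  filter_upwards [h4] with n hn
  field_simp
  ring

lemma factor_tendsto (i : ℕ) :
    Tendsto (fun n : ℕ => ((n / 2 - i : ℕ) : ℝ) / ((n - i : ℕ) : ℝ)) atTop (𝓝 (1 / 2)) := by
  have hlow : Tendsto (fun n : ℕ => (((n : ℝ) + (-2 - 2 * i)) / 2) / ((n : ℝ) + (-i)))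
      atTop (𝓝 ((1 / 2) * 1)) := by
    have := (tendsto_const_nhds : Tendsto (fun _ : ℕ => (1/2 : ℝ)) atTop (𝓝 (1/2))).mul
      (tendsto_ratio (-2 - 2 * i) (-i))
    apply this.congr
    intro n; ring
  have hup : Tendsto (fun n : ℕ => (((n : ℝ) + (-2 * i)) / 2) / ((n : ℝ) + (-i)))
      atTop (𝓝 ((1 / 2) * 1)) := by
    have := (tendsto_const_nhds : Tendsto (fun _ : ℕ => (1/2 : ℝ)) atTop (𝓝 (1/2))).mul
      (tendsto_ratio (-2 * i) (-i))
    apply this.congr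
    intro n; ring
  rw [mul_one] at hlow hup
  apply tendsto_of_tendsto_of_tendsto_of_le_of_le' hlow hup
  · have h5 : ∀ᶠ n : ℕ in atTop, 2 * i + 4 ≤ n := eventually_atTop.2 ⟨_, fun n h => h⟩
    filter_upwards [h5] with n hn
    have e1 : ((n - i : ℕ) : ℝ) = (n : ℝ) + (-i) := by
      rw [Nat.cast_sub (by omega)]; ring
    have e2 : ((n / 2 - i : ℕ) : ℝ) = ((n / 2 : ℕ) : ℝ) - i := by
      rw [Nat.cast_sub (by omega)]
    have e3 : (n : ℝ) - 2 ≤ 2 * ((n / 2 : ℕ) : ℝ) := by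
      have h : (n - 2 : ℕ) ≤ 2 * (n / 2) := by omega
      have h' := (Nat.cast_le (α := ℝ)).2 h
      rw [Nat.cast_sub (by omega : 2 ≤ n)] at h'
      push_cast at h'
      linarith
    have hB : (0 : ℝ) < (n : ℝ) + (-i) := by
      have : ((2 * i + 4 : ℕ) : ℝ) ≤ (n : ℝ) := Nat.cast_le.2 hn
      push_cast at this
      linarith
    rw [e1, e2]
    apply (div_le_div_iff_of_pos_right hB).2
    linarith
  · have h5 : ∀ᶠ n : ℕ in atTop, 2 * i + 4 ≤ n := eventually_atTop.2 ⟨_, fun n h => h⟩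
    filter_upwards [h5] with n hn
    have e1 : ((n - i : ℕ) : ℝ) = (n : ℝ) + (-i) := by
      rw [Nat.cast_sub (by omega)]; ring
    have e2 : ((n / 2 - i : ℕ) : ℝ) = ((n / 2 : ℕ) : ℝ) - i := by
      rw [Nat.cast_sub (by omega)]
    have e3 : 2 * ((n / 2 : ℕ) : ℝ) ≤ (n : ℝ) := by
      have h : 2 * (n / 2) ≤ n := by omega
      have h' := (Nat.cast_le (α := ℝ)).2 h
      push_cast at h'
      linarith
    have hB : (0 : ℝ) < (n : ℝ) + (-i) := by
      have : ((2 * i + 4 : ℕ) : ℝ) ≤ (n : ℝ) := Nat.cast_le.2 hn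
      push_cast at this
      linarith
    rw [e1, e2]
    apply (div_le_div_iff_of_pos_right hB).2
    linarith

lemma choose_cast_eq (m k : ℕ) (h : k ≤ m) :
    (m.choose k : ℝ) = (∏ i ∈ Finset.range k, ((m - i : ℕ) : ℝ)) / (k.factorial : ℝ) := by
  have h1 : (m.descFactorial k : ℝ) = (k.factorial : ℝ) * (m.choose k : ℝ) := by
    exact_mod_cast congrArg (Nat.cast : ℕ → ℝ) (Nat.descFactorial_eq_factorial_mul_choose m k)
  have h2 : (m.descFactorial k : ℝ) = ∏ i ∈ Finset.range k, ((m - i : ℕ) : ℝ) := by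
    rw [Nat.descFactorial_eq_prod_range]
    push_cast [Nat.cast_prod]
    rfl
  rw [← h2, h1]
  field_simp

lemma tendsto_half_choose (r : ℕ) :
    Tendsto (fun n : ℕ => ((n / 2).choose r : ℝ) / (n.choose r : ℝ)) atTop (𝓝 ((1 / 2) ^ r)) := by
  have hprod : Tendsto (fun n : ℕ => ∏ i ∈ Finset.range r,
      (((n / 2 - i : ℕ) : ℝ) / ((n - i : ℕ) : ℝ))) atTop
      (𝓝 (∏ _i ∈ Finset.range r, (1 / 2 : ℝ))) :=
    tendsto_finset_prod _ (fun i _ => factor_tendsto i)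
  rw [Finset.prod_const, Finset.card_range] at hprod
  apply hprod.congr'
  have h5 : ∀ᶠ n : ℕ in atTop, 2 * r + 2 ≤ n := eventually_atTop.2 ⟨_, fun n h => h⟩
  filter_upwards [h5] with n hn
  have hr2 : r ≤ n / 2 := by omega
  have hrn : r ≤ n := by omega
  rw [choose_cast_eq (n / 2) r hr2, choose_cast_eq n r hrn]
  rw [Finset.prod_div_distrib]
  have hfac : (r.factorial : ℝ) ≠ 0 := by positivity
  have hden : ∀ i ∈ Finset.range r, ((n - i : ℕ) : ℝ) ≠ 0 := by
    intro i hi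
    rw [Finset.mem_range] at hi
    have : 0 < n - i := by omega
    positivity
  have hBne : (∏ i ∈ Finset.range r, ((n - i : ℕ) : ℝ)) ≠ 0 :=
    Finset.prod_ne_zero_iff.2 hden
  field_simp

lemma exTri_lower {r : ℕ} (n : ℕ) (hr : 2 ≤ r) (hn : 2 * r + 4 ≤ n) :
    2 * ((n / 2).choose r) ≤ exTri r n :=
  le_trans (altSet_card n hr hn) (le_exTri (altSet_tf r n))

lemma a_upper {r : ℕ} (hr : 1 ≤ r) {n : ℕ} (hn : r ≤ n) :
    (exTri r n : ℝ) / (n.choose r : ℝ) ≤ (n : ℝ) / ((r : ℝ) * ((n - (r - 1) : ℕ) : ℝ)) := by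
  have h0 := upper_main (r := r) (n := n) hr
  have hid : n.choose r * r = n.choose (r - 1) * (n - (r - 1)) := by
    have h := Nat.choose_succ_right_eq n (r - 1)
    have hr' : r - 1 + 1 = r := by omega
    rwa [hr'] at h
  have hnat : exTri r n * (r * (n - (r - 1))) ≤ n * n.choose r := by
    have step : exTri r n * (r * (n - (r - 1))) * r ≤ n * n.choose r * r := by
      calc exTri r n * (r * (n - (r - 1))) * r
          = (r ^ 2 * exTri r n) * (n - (r - 1)) := by ring
        _ ≤ (n * n.choose (r - 1)) * (n - (r - 1)) := Nat.mul_le_mul_right _ h0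
        _ = n * (n.choose (r - 1) * (n - (r - 1))) := by ring
        _ = n * (n.choose r * r) := by rw [← hid]
        _ = n * n.choose r * r := by ring
    exact Nat.le_of_mul_le_mul_right step (by omega)
  have hc : (0 : ℝ) < (n.choose r : ℝ) := by exact_mod_cast Nat.choose_pos hn
  have hd : (0 : ℝ) < (r : ℝ) * ((n - (r - 1) : ℕ) : ℝ) := by
    have h1 : (0 : ℝ) < (r : ℝ) := by exact_mod_cast hr
    have h2 : 0 < n - (r - 1) := by omega
    have h2' : (0 : ℝ) < ((n - (r - 1) : ℕ) : ℝ) := by exact_mod_cast h2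
    positivity
  rw [div_le_div_iff₀ hc hd]
  exact_mod_cast hnat

lemma a_upper_tendsto {r : ℕ} (hr : 1 ≤ r) :
    Tendsto (fun n : ℕ => (n : ℝ) / ((r : ℝ) * ((n - (r - 1) : ℕ) : ℝ))) atTop
      (𝓝 (1 / (r : ℝ))) := by
  have h1 : Tendsto (fun n : ℕ => (1 / (r : ℝ)) * (((n : ℝ) + 0) / ((n : ℝ) + (-(r - 1 : ℕ)))))
      atTop (𝓝 ((1 / (r : ℝ)) * 1)) :=
    tendsto_const_nhds.mul (tendsto_ratio 0 (-((r - 1 : ℕ) : ℝ)))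
  rw [mul_one] at h1
  apply h1.congr'
  have h5 : ∀ᶠ n : ℕ in atTop, r ≤ n := eventually_atTop.2 ⟨_, fun n h => h⟩
  filter_upwards [h5] with n hn
  have e1 : ((n - (r - 1) : ℕ) : ℝ) = (n : ℝ) + (-((r - 1 : ℕ) : ℝ)) := by
    rw [Nat.cast_sub (by omega)]; ring
  have hrne : (r : ℝ) ≠ 0 := by
    have : (0 : ℝ) < (r : ℝ) := by exact_mod_cast hr
    linarith
  rw [e1, add_zero]
  field_simp

end Stmt9

/-- for every `r ≥ 2` the Turán density
`π(H(r)) = lim_{n→∞} ex(H(r),n)/C(n,r)` (the limit exists) satisfies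
`1/2^(r-1) ≤ π(H(r)) ≤ 1/r`. -/
theorem statement9 (r : ℕ) (hr : 2 ≤ r) :
    ∃ L : ℝ,
      Filter.Tendsto (fun n => (exTri r n : ℝ) / (n.choose r : ℝ)) Filter.atTop (nhds L) ∧
      1 / 2 ^ (r - 1) ≤ L ∧ L ≤ 1 / (r : ℝ) := by
  classical
  open Filter Topology Stmt9 in
  have hr1 : 1 ≤ r := by omega
  set a : ℕ → ℝ := fun n => (exTri r n : ℝ) / (n.choose r : ℝ) with ha
  set b : ℕ → ℝ := fun k => a (k + r) with hb
  have hbn : ∀ k, 0 ≤ b k := by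
    intro k
    apply div_nonneg <;> positivity
  have hanti : Antitone b := by
    apply antitone_nat_of_succ_le
    intro k
    have hn : r ≤ k + r := by omega
    have h1 := exTri_rec' (r := r) (n := k + r) hr1
    have hc1 : (0 : ℝ) < ((k + r).choose r : ℝ) := by exact_mod_cast Nat.choose_pos hn
    have hc2 : (0 : ℝ) < ((k + r + 1).choose r : ℝ) := by
      exact_mod_cast Nat.choose_pos (by omega : r ≤ k + r + 1)
    show a (k + 1 + r) ≤ a (k + r)
    have he : k + 1 + r = k + r + 1 := by omega
    rw [he, ha]
    simp only
    rw [div_le_div_iff₀ hc2 hc1]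
    exact_mod_cast h1
  have hbdd : BddBelow (Set.range b) := by
    refine ⟨0, ?_⟩
    rintro x ⟨k, rfl⟩
    exact hbn k
  have hbt : Filter.Tendsto b Filter.atTop (nhds (⨅ k, b k)) := tendsto_atTop_ciInf hanti hbdd
  have hat : Filter.Tendsto a Filter.atTop (nhds (⨅ k, b k)) :=
    (Filter.tendsto_add_atTop_iff_nat r).1 hbt
  refine ⟨⨅ k, b k, hat, ?_, ?_⟩
  · -- lower bound
    have hv : Filter.Tendsto (fun n : ℕ => 2 * (((n / 2).choose r : ℝ) / (n.choose r : ℝ)))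
        Filter.atTop (nhds (2 * (1 / 2 : ℝ) ^ r)) :=
      tendsto_const_nhds.mul (tendsto_half_choose r)
    have hle : ∀ᶠ n : ℕ in Filter.atTop,
        2 * (((n / 2).choose r : ℝ) / (n.choose r : ℝ)) ≤ a n := by
      have h5 : ∀ᶠ n : ℕ in Filter.atTop, 2 * r + 4 ≤ n :=
        Filter.eventually_atTop.2 ⟨_, fun n h => h⟩
      filter_upwards [h5] with n hn
      have hc : (0 : ℝ) < (n.choose r : ℝ) := by
        exact_mod_cast Nat.choose_pos (by omega : r ≤ n)
      have h6 := exTri_lower (r := r) n hr hn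
      rw [ha]
      simp only
      rw [mul_div_assoc'] -- 2 * (x / C) = (2 * x)/C
      apply (div_le_div_iff_of_pos_right hc).2
      exact_mod_cast h6
    have hfinal := le_of_tendsto_of_tendsto hv hat hle
    have heq : (2 : ℝ) * (1 / 2 : ℝ) ^ r = 1 / 2 ^ (r - 1) := by
      have h7 : (2 : ℝ) ^ r = 2 * 2 ^ (r - 1) := by
        conv_lhs => rw [show r = (r - 1) + 1 by omega]
        rw [pow_succ]
        ring
      rw [div_pow, one_pow, h7]
      field_simp
    rw [← heq]
    exact hfinal
  · -- upper bound
    have hu := a_upper_tendsto (r := r) hr1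
    have hle : ∀ᶠ n : ℕ in Filter.atTop,
        a n ≤ (n : ℝ) / ((r : ℝ) * ((n - (r - 1) : ℕ) : ℝ)) := by
      have h5 : ∀ᶠ n : ℕ in Filter.atTop, r ≤ n := Filter.eventually_atTop.2 ⟨_, fun n h => h⟩
      filter_upwards [h5] with n hn
      exact a_upper hr1 hn
    exact le_of_tendsto_of_tendsto hat hu hle
end
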